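/- arXiv:1304.2172 — 9 statements merged into one kernel-verified Lean document; each statement's English description precedes it below -/
import Mathlib

section
/- For probability mass functions P and Q on a finite alphabet 𝒳 and a constant c > 0, define U = P/(1+c) + cQ/(1+c) and the generalized log-likelihood function h_c(P,Q) = D(P‖U) + c·D(Q‖U). Then h_c(P,Q) = D(P‖Q) − (1+c)·D(U‖Q). -/
open Finset Filter Topology
open scoped Classical

/-- Kullback-Leibler divergence (base-2 logarithm) on a finite alphabet. -/
noncomputable def klDiv {X : Type*} [Fintype X] (P Q : X → ℝ) : ℝ :=
  ∑ a, P a * Real.logb 2 (P a / Q a)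

/-- `P` is a probability mass function on the finite alphabet `X`. -/
def IsPmf {X : Type*} [Fintype X] (P : X → ℝ) : Prop :=
  (∀ a, 0 ≤ P a) ∧ ∑ a, P a = 1

/-- Empirical pmf (type) of a sequence. -/
noncomputable def empPmf {X : Type*} [Fintype X] [DecidableEq X] {n : ℕ}
    (x : Fin n → X) (a : X) : ℝ :=
  ((Finset.univ.filter (fun i => x i = a)).card : ℝ) / n

/-- The mixture `U = P/(1+c) + cQ/(1+c)`. -/
noncomputable def mixPmf {X : Type*} (c : ℝ) (P Q : X → ℝ) : X → ℝ :=
  fun a => P a / (1 + c) + c * Q a / (1 + c)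

/-- Generalized log-likelihood ratio function `h_c`. -/
noncomputable def hGen {X : Type*} [Fintype X] (c : ℝ) (P Q : X → ℝ) : ℝ :=
  klDiv P (mixPmf c P Q) + c * klDiv Q (mixPmf c P Q)

/-- Shannon entropy (base 2). -/
noncomputable def shannonEntropy {X : Type*} [Fintype X] (P : X → ℝ) : ℝ :=
  -∑ a, P a * Real.logb 2 (P a)

theorem stmt2 {X : Type*} [Fintype X] (c : ℝ) (hc : 0 < c)
    (P Q : X → ℝ) (hP : IsPmf P) (hQ : IsPmf Q) (hQpos : ∀ a, 0 < Q a) :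
    hGen c P Q = klDiv P Q - (1 + c) * klDiv (mixPmf c P Q) Q := by
  have h1c : (0:ℝ) < 1 + c := by linarith
  simp only [hGen, klDiv, Finset.mul_sum, ← Finset.sum_add_distrib,
    ← Finset.sum_sub_distrib]
  apply Finset.sum_congr rfl
  intro a _
  have hQa := hQpos a
  have hPa := hP.1 a
  have hU : mixPmf c P Q a = (P a + c * Q a) / (1 + c) := by
    simp [mixPmf]; ring
  have hUpos : 0 < mixPmf c P Q a := by
    rw [hU]; positivity
  have hQU : 0 < Q a / mixPmf c P Q a := by positivity
  have hUQ : Real.logb 2 (mixPmf c P Q a / Q a) =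
      - Real.logb 2 (Q a / mixPmf c P Q a) := by
    rw [Real.logb_div (ne_of_gt hUpos) (ne_of_gt hQa),
        Real.logb_div (ne_of_gt hQa) (ne_of_gt hUpos)]
    ring
  have hsum : (1 + c) * mixPmf c P Q a = P a + c * Q a := by
    rw [hU]; field_simp
  rcases eq_or_lt_of_le hPa with h0 | hPpos
  · rw [← h0]
    have : (1 + c) * (mixPmf c P Q a * Real.logb 2 (mixPmf c P Q a / Q a))
        = ((1 + c) * mixPmf c P Q a) * Real.logb 2 (mixPmf c P Q a / Q a) := by ring
    rw [this, hsum, ← h0, hUQ]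
    ring
  · have hsplit : Real.logb 2 (P a / mixPmf c P Q a) =
        Real.logb 2 (P a / Q a) + Real.logb 2 (Q a / mixPmf c P Q a) := by
      rw [← Real.logb_mul (by positivity) (ne_of_gt hQU)]
      congr 1
      field_simp
    have : (1 + c) * (mixPmf c P Q a * Real.logb 2 (mixPmf c P Q a / Q a))
        = ((1 + c) * mixPmf c P Q a) * Real.logb 2 (mixPmf c P Q a / Q a) := by ring
    rw [this, hsum, hUQ, hsplit]
    ring
end

section
/- Let c be a finite nonzero positive constant and let P, P_X be probability mass functions on a finite alphabet 𝒳 with P ≠ P_X. Then h_c(P, P_X) < D(P‖P_X), where h_c(P,Q) = D(P‖U) + c·D(Q‖U) with U = P/(1+c) + cQ/(1+c). -/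
open Finset Filter Topology
open scoped Classical

theorem stmt3 {X : Type*} [Fintype X] (c : ℝ) (hc : 0 < c)
    (P PX : X → ℝ) (hP : IsPmf P) (hPX : IsPmf PX) (hPXpos : ∀ a, 0 < PX a)
    (hne : P ≠ PX) :
    hGen c P PX < klDiv P PX := by
  set U := mixPmf c P PX with hU
  have h1c : (0:ℝ) < 1 + c := by linarith
  have hUpos : ∀ a, 0 < U a := fun a => by
    have := hP.1 a; have := hPXpos a
    have : 0 < c * PX a / (1 + c) := by positivity
    have h2 : 0 ≤ P a / (1 + c) := by positivity
    simp only [hU, mixPmf]; linarith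
  have hUsum : ∑ a, U a = 1 := by
    simp only [hU, mixPmf]
    rw [Finset.sum_add_distrib, ← Finset.sum_div, ← Finset.sum_div, ← Finset.mul_sum,
      hP.2, hPX.2]
    field_simp
  have hlog2 : (0:ℝ) < Real.log 2 := Real.log_pos (by norm_num)
  -- Gibbs: klDiv U PX > 0
  have hgibbs : 0 < klDiv U PX := by
    have key : ∑ a, U a * Real.log (PX a / U a) < 0 := by
      have hle : ∀ a ∈ Finset.univ, U a * Real.log (PX a / U a) ≤ PX a - U a := by
        intro a _
        have hr : 0 < PX a / U a := div_pos (hPXpos a) (hUpos a)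
        have := Real.log_le_sub_one_of_pos hr
        have h2 : U a * Real.log (PX a / U a) ≤ U a * (PX a / U a - 1) :=
          mul_le_mul_of_nonneg_left this (hUpos a).le
        calc U a * Real.log (PX a / U a) ≤ U a * (PX a / U a - 1) := h2
          _ = PX a - U a := by field_simp [(hUpos a).ne']
      obtain ⟨a0, ha0⟩ : ∃ a, U a ≠ PX a := by
        by_contra h
        push_neg at h
        apply hne
        funext a
        have := h a
        simp only [hU, mixPmf] at this
        have : P a = PX a := by
          field_simp at this; linarith
        exact this
      have hlt : U a0 * Real.log (PX a0 / U a0) < PX a0 - U a0 := by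
        have hr : 0 < PX a0 / U a0 := div_pos (hPXpos a0) (hUpos a0)
        have hr1 : PX a0 / U a0 ≠ 1 := by
          intro h
          exact ha0 ((div_eq_one_iff_eq (hUpos a0).ne').mp h).symm
        have hlog : Real.log (PX a0 / U a0) < PX a0 / U a0 - 1 := by
          have := Real.add_one_lt_exp (Real.log_ne_zero_of_pos_of_ne_one hr hr1)
          calc Real.log (PX a0 / U a0)
              = (Real.log (PX a0 / U a0) + 1) - 1 := by ring
            _ < Real.exp (Real.log (PX a0 / U a0)) - 1 := by linarith
            _ = PX a0 / U a0 - 1 := by rw [Real.exp_log hr]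
        have h2 : U a0 * Real.log (PX a0 / U a0) < U a0 * (PX a0 / U a0 - 1) :=
          (mul_lt_mul_iff_right₀ (hUpos a0)).mpr hlog
        calc U a0 * Real.log (PX a0 / U a0) < U a0 * (PX a0 / U a0 - 1) := h2
          _ = PX a0 - U a0 := by field_simp [(hUpos a0).ne']
      have := Finset.sum_lt_sum hle ⟨a0, Finset.mem_univ a0, hlt⟩
      calc ∑ a, U a * Real.log (PX a / U a) < ∑ a, (PX a - U a) := this
        _ = 0 := by rw [Finset.sum_sub_distrib, hPX.2, hUsum]; ring
    have : 0 < ∑ a, U a * Real.log (U a / PX a) := by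
      have hterm : ∀ a : X, U a * Real.log (U a / PX a) = -(U a * Real.log (PX a / U a)) := by
        intro a
        rw [show Real.log (U a / PX a) = -Real.log (PX a / U a) by
          rw [← Real.log_inv, inv_div]]
        ring
      have : ∑ a, U a * Real.log (U a / PX a) = -∑ a, U a * Real.log (PX a / U a) := by
        simp only [hterm, Finset.sum_neg_distrib]
      linarith [this, key]
    have heq : klDiv U PX = (∑ a, U a * Real.log (U a / PX a)) / Real.log 2 := by
      unfold klDiv
      rw [Finset.sum_div]
      apply Finset.sum_congr rfl
      intro a _
      rw [Real.logb, mul_div_assoc]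
    rw [heq]
    positivity
  -- identity: klDiv P PX - hGen c P PX = (1+c) * klDiv U PX
  have hid : klDiv P PX - hGen c P PX = (1 + c) * klDiv U PX := by
    unfold hGen klDiv
    rw [← hU]
    rw [Finset.mul_sum, Finset.mul_sum,
      ← Finset.sum_add_distrib, ← Finset.sum_sub_distrib]
    apply Finset.sum_congr rfl
    intro a _
    have hPXa := hPXpos a
    have hUa := hUpos a
    have hcU : (1 + c) * U a = P a + c * PX a := by
      simp only [hU, mixPmf]; field_simp
    have hlogU : Real.logb 2 (U a / PX a) = Real.logb 2 (U a) - Real.logb 2 (PX a) :=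
      Real.logb_div hUa.ne' hPXa.ne'
    have hlogPX : Real.logb 2 (PX a / U a) = Real.logb 2 (PX a) - Real.logb 2 (U a) :=
      Real.logb_div hPXa.ne' hUa.ne'
    rcases eq_or_lt_of_le (hP.1 a) with h0 | hPa
    · rw [← h0]
      simp only [zero_mul, zero_div]
      have hcU0 : (1 + c) * U a = c * PX a := by rw [hcU, ← h0]; ring
      rw [hlogU, hlogPX]
      rw [show (1 + c) * (U a * (Real.logb 2 (U a) - Real.logb 2 (PX a)))
        = ((1 + c) * U a) * (Real.logb 2 (U a) - Real.logb 2 (PX a)) by ring, hcU0]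
      ring
    · have hlogP1 : Real.logb 2 (P a / PX a) = Real.logb 2 (P a) - Real.logb 2 (PX a) :=
        Real.logb_div hPa.ne' hPXa.ne'
      have hlogP2 : Real.logb 2 (P a / U a) = Real.logb 2 (P a) - Real.logb 2 (U a) :=
        Real.logb_div hPa.ne' hUa.ne'
      rw [hlogP1, hlogP2, hlogPX, hlogU]
      rw [show (1 + c) * (U a * (Real.logb 2 (U a) - Real.logb 2 (PX a)))
        = ((1 + c) * U a) * (Real.logb 2 (U a) - Real.logb 2 (PX a)) by ring, hcU]
      ring
  nlinarith [mul_pos h1c hgibbs]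
end

section
/- For pmf's P, Q on a finite alphabet 𝒳 and c > 0, h_c(P,Q) ≤ D(P‖Q), with equality if and only if P = Q. -/
open Finset Filter Topology
open scoped Classical

lemma logb_mul_split {p u : ℝ} (hp : 0 ≤ p) (hu : 0 < u) :
    p * Real.logb 2 (p / u) = p * Real.logb 2 p - p * Real.logb 2 u := by
  rcases eq_or_lt_of_le hp with h | h
  · simp [← h]
  · rw [Real.logb_div h.ne' hu.ne']; ring

lemma klDiv_nonneg' {X : Type*} [Fintype X] {U Q : X → ℝ}
    (hU : ∀ a, 0 < U a) (hQ : ∀ a, 0 < Q a)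
    (hUs : ∑ a, U a = 1) (hQs : ∑ a, Q a = 1) :
    0 ≤ klDiv U Q ∧ (klDiv U Q = 0 ↔ U = Q) := by
  set f : X → ℝ := fun a => U a * Real.log (U a / Q a) - (U a - Q a) with hf
  have hfnn : ∀ a ∈ (Finset.univ : Finset X), 0 ≤ f a := by
    intro a _
    have h1 : Real.log (Q a / U a) ≤ Q a / U a - 1 :=
      Real.log_le_sub_one_of_pos (div_pos (hQ a) (hU a))
    have h2 : Real.log (U a / Q a) = - Real.log (Q a / U a) := by
      rw [← Real.log_inv, inv_div]
    have h3 : U a * (Q a / U a - 1) = Q a - U a := by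
      rw [mul_sub, mul_div_cancel₀ _ (hU a).ne', mul_one]
    have h4 : U a * Real.log (Q a / U a) ≤ Q a - U a := by
      calc U a * Real.log (Q a / U a) ≤ U a * (Q a / U a - 1) :=
            mul_le_mul_of_nonneg_left h1 (hU a).le
        _ = Q a - U a := h3
    show 0 ≤ U a * Real.log (U a / Q a) - (U a - Q a)
    rw [h2]
    nlinarith
  have h0 : ∑ a, (U a - Q a) = 0 := by
    rw [Finset.sum_sub_distrib, hUs, hQs]; ring
  have hsum : klDiv U Q = (∑ a, f a) / Real.log 2 := by
    have : ∑ a, f a = ∑ a, U a * Real.log (U a / Q a) := by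
      simp only [hf]
      rw [Finset.sum_sub_distrib, h0, sub_zero]
    rw [this, klDiv, Finset.sum_div]
    apply Finset.sum_congr rfl
    intro a _
    rw [Real.logb, mul_div_assoc]
  have hlog2 : (0:ℝ) < Real.log 2 := Real.log_pos (by norm_num)
  have hfs : 0 ≤ ∑ a, f a := Finset.sum_nonneg hfnn
  constructor
  · rw [hsum]; positivity
  constructor
  · intro h
    have hfz : ∑ a, f a = 0 := by
      rw [hsum] at h
      exact (div_eq_zero_iff.mp h).resolve_right hlog2.ne'
    have heach := (Finset.sum_eq_zero_iff_of_nonneg hfnn).mp hfz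
    funext a
    by_contra hne
    have hne' : Q a / U a ≠ 1 := by
      intro h1
      exact hne ((div_eq_one_iff_eq (hU a).ne').mp h1).symm
    have h1 : Real.log (Q a / U a) < Q a / U a - 1 :=
      Real.log_lt_sub_one_of_pos (div_pos (hQ a) (hU a)) hne'
    have h2 : Real.log (U a / Q a) = - Real.log (Q a / U a) := by
      rw [← Real.log_inv, inv_div]
    have h3 : U a * (Q a / U a - 1) = Q a - U a := by
      rw [mul_sub, mul_div_cancel₀ _ (hU a).ne', mul_one]
    have h4 : U a * Real.log (Q a / U a) < Q a - U a := by
      calc U a * Real.log (Q a / U a) < U a * (Q a / U a - 1) :=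
            mul_lt_mul_of_pos_left h1 (hU a)
        _ = Q a - U a := h3
    have h5 := heach a (Finset.mem_univ a)
    have h5' : U a * Real.log (U a / Q a) - (U a - Q a) = 0 := h5
    rw [h2] at h5'
    nlinarith
  · intro h
    subst h
    simp only [klDiv]
    apply Finset.sum_eq_zero
    intro a _
    rw [div_self (hU a).ne', Real.logb_one, mul_zero]

lemma hGen_eq {X : Type*} [Fintype X] {c : ℝ} (hc : 0 < c)
    {P Q : X → ℝ} (hP : ∀ a, 0 ≤ P a) (hQ : ∀ a, 0 < Q a) :
    hGen c P Q = klDiv P Q - (1 + c) * klDiv (mixPmf c P Q) Q := by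
  have h1c : (0:ℝ) < 1 + c := by linarith
  have hU : ∀ a, 0 < mixPmf c P Q a := by
    intro a
    have h1 : 0 < c * Q a / (1 + c) := div_pos (mul_pos hc (hQ a)) h1c
    have h2 : 0 ≤ P a / (1 + c) := div_nonneg (hP a) h1c.le
    unfold mixPmf
    linarith
  unfold hGen klDiv
  rw [Finset.mul_sum, Finset.mul_sum, ← Finset.sum_add_distrib, ← Finset.sum_sub_distrib]
  apply Finset.sum_congr rfl
  intro a _
  have hU' : (1 + c) * mixPmf c P Q a = P a + c * Q a := by
    unfold mixPmf; field_simp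
  rw [logb_mul_split (hP a) (hU a), logb_mul_split (hQ a).le (hU a),
      logb_mul_split (hP a) (hQ a), logb_mul_split (hU a).le (hQ a)]
  linear_combination (Real.logb 2 (mixPmf c P Q a) - Real.logb 2 (Q a)) * hU'

theorem stmt5 {X : Type*} [Fintype X] (c : ℝ) (hc : 0 < c)
    (P Q : X → ℝ) (hP : IsPmf P) (hQ : IsPmf Q) (hQpos : ∀ a, 0 < Q a) :
    hGen c P Q ≤ klDiv P Q ∧ (hGen c P Q = klDiv P Q ↔ P = Q) := by
  obtain ⟨hPnn, hPs⟩ := hP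
  obtain ⟨hQnn, hQs⟩ := hQ
  have h1c : (0:ℝ) < 1 + c := by linarith
  have hU : ∀ a, 0 < mixPmf c P Q a := by
    intro a
    have h1 : 0 < c * Q a / (1 + c) := div_pos (mul_pos hc (hQpos a)) h1c
    have h2 : 0 ≤ P a / (1 + c) := div_nonneg (hPnn a) h1c.le
    unfold mixPmf
    linarith
  have hUs : ∑ a, mixPmf c P Q a = 1 := by
    unfold mixPmf
    rw [Finset.sum_add_distrib]
    rw [← Finset.sum_div, ← Finset.sum_div, hPs]
    have : ∑ a, c * Q a = c := by rw [← Finset.mul_sum, hQs, mul_one]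
    rw [this]
    field_simp
  obtain ⟨hKnn, hKiff⟩ := klDiv_nonneg' hU hQpos hUs hQs
  have hid := hGen_eq hc hPnn hQpos (X := X)
  have hUeqQ : mixPmf c P Q = Q ↔ P = Q := by
    constructor
    · intro h
      funext a
      have := congrFun h a
      unfold mixPmf at this
      field_simp at this
      linarith [this]
    · intro h
      subst h
      funext a
      unfold mixPmf
      rw [← add_div, div_eq_iff h1c.ne']
      ring
  constructor
  · rw [hid]
    nlinarith
  · rw [hid]
    constructor
    · intro h
      have : klDiv (mixPmf c P Q) Q = 0 := by
        have : (1 + c) * klDiv (mixPmf c P Q) Q = 0 := by linarith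
        exact (mul_eq_zero.mp this).resolve_left h1c.ne'
      exact hUeqQ.mp (hKiff.mp this)
    · intro h
      have : klDiv (mixPmf c P Q) Q = 0 := hKiff.mpr (hUeqQ.mpr h)
      rw [this]; ring
end

section
/- Let 𝒳 be a finite alphabet and define h(x^n, t^N) = D(P_{x^n}‖P_{r^{n+N}}) + (N/n)·D(P_{t^N}‖P_{r^{n+N}}), where r^{n+N} is the concatenation of x^n and t^N. Then h(x^n, t^N) admits the equivalent expression h(P_{x^n}, P_{t^N}) = D(P_{x^n}‖P_{t^N}) − ((N+n)/n)·D(P_{r^{n+N}}‖P_{t^N}), and consequently h(P_{x^n}, P_{t^N}) ≤ D(P_{x^n}‖P_{t^N}) with equality only if P_{x^n} = P_{t^N}. -/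
open Finset Filter Topology
open scoped Classical

lemma sum_empPmf' {X : Type*} [Fintype X] [DecidableEq X] {m : ℕ} (hm : 0 < m)
    (y : Fin m → X) : ∑ a, empPmf y a = 1 := by
  unfold empPmf
  rw [← Finset.sum_div, ← Nat.cast_sum]
  rw [← Finset.card_eq_sum_card_fiberwise (f := y) (by intro i _; exact Finset.mem_univ _)]
  simp [Finset.card_univ]
  omega

lemma card_append' {X : Type*} [Fintype X] [DecidableEq X] {n N : ℕ}
    (x : Fin n → X) (t : Fin N → X) (a : X) :
    ((Finset.univ.filter (fun i : Fin (n+N) => Fin.append x t i = a)).card) =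
      (Finset.univ.filter (fun i : Fin n => x i = a)).card +
      (Finset.univ.filter (fun i : Fin N => t i = a)).card := by
  rw [Finset.card_filter, Finset.card_filter, Finset.card_filter, Fin.sum_univ_add]
  simp

theorem stmt8 {X : Type*} [Fintype X] [DecidableEq X] {n N : ℕ} (hn : 0 < n) (hN : 0 < N)
    (x : Fin n → X) (t : Fin N → X) (htpos : ∀ a, 0 < empPmf t a) :
    klDiv (empPmf x) (empPmf (Fin.append x t)) +
        ((N : ℝ) / n) * klDiv (empPmf t) (empPmf (Fin.append x t)) =
      klDiv (empPmf x) (empPmf t) -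
        (((N : ℝ) + n) / n) * klDiv (empPmf (Fin.append x t)) (empPmf t) ∧
    klDiv (empPmf x) (empPmf (Fin.append x t)) +
        ((N : ℝ) / n) * klDiv (empPmf t) (empPmf (Fin.append x t)) ≤
      klDiv (empPmf x) (empPmf t) ∧
    (klDiv (empPmf x) (empPmf (Fin.append x t)) +
        ((N : ℝ) / n) * klDiv (empPmf t) (empPmf (Fin.append x t)) =
      klDiv (empPmf x) (empPmf t) → empPmf x = empPmf t) := by
  set P := empPmf x with hPdef
  set Q := empPmf t with hQdef
  set R := empPmf (Fin.append x t) with hRdef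
  have hn' : (0:ℝ) < n := by exact_mod_cast hn
  have hN' : (0:ℝ) < N := by exact_mod_cast hN
  have hPnn : ∀ a, 0 ≤ P a := fun a => by
    rw [hPdef]; unfold empPmf; positivity
  have hR : ∀ a, R a = ((n:ℝ) * P a + N * Q a) / (n + N) := by
    intro a
    rw [hRdef, hPdef, hQdef]; unfold empPmf
    rw [card_append' x t a]
    push_cast
    field_simp
  have hRpos : ∀ a, 0 < R a := fun a => by
    rw [hR a]
    have h1 := htpos a
    have h2 := hPnn a
    positivity
  -- key identity
  have key : klDiv P R + ((N:ℝ)/n) * klDiv Q R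
      = klDiv P Q - (((N:ℝ)+n)/n) * klDiv R Q := by
    unfold klDiv
    rw [Finset.mul_sum, Finset.mul_sum, ← Finset.sum_add_distrib, ← Finset.sum_sub_distrib]
    apply Finset.sum_congr rfl
    intro a _
    have hQa : 0 < Q a := htpos a
    have hRa : 0 < R a := hRpos a
    have h1 : P a * Real.logb 2 (P a / R a)
        = P a * Real.logb 2 (P a / Q a) - P a * Real.logb 2 (R a / Q a) := by
      rcases eq_or_lt_of_le (hPnn a) with h | h
      · simp [← h]
      · have hdiv : P a / R a = (P a / Q a) / (R a / Q a) := by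
          field_simp
        rw [hdiv, Real.logb_div (ne_of_gt (div_pos h hQa)) (ne_of_gt (div_pos hRa hQa))]
        ring
    have h2 : Q a * Real.logb 2 (Q a / R a) = -(Q a * Real.logb 2 (R a / Q a)) := by
      have hi : (R a / Q a)⁻¹ = Q a / R a := inv_div _ _
      rw [← hi, Real.logb_inv]; ring
    have h3 : P a + ((N:ℝ)/n) * Q a = (((N:ℝ)+n)/n) * R a := by
      rw [hR a]; field_simp; ring
    rw [h1, h2]
    linear_combination (-(Real.logb 2 (R a / Q a))) * h3
  have hsumP : ∑ a, P a = 1 := sum_empPmf' hn x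
  have hsumQ : ∑ a, Q a = 1 := sum_empPmf' hN t
  have hsumR : ∑ a, R a = 1 := sum_empPmf' (by omega) (Fin.append x t)
  have hlog2 : (0:ℝ) < Real.log 2 := Real.log_pos (by norm_num)
  -- natural-log Gibbs
  have hterm : ∀ a, R a - Q a ≤ R a * Real.log (R a / Q a) := by
    intro a
    have hQa := htpos a
    have hRa := hRpos a
    have hlog : Real.log (Q a / R a) ≤ Q a / R a - 1 :=
      Real.log_le_sub_one_of_pos (div_pos hQa hRa)
    have hneg : Real.log (R a / Q a) = - Real.log (Q a / R a) := by
      rw [← Real.log_inv, inv_div]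
    rw [hneg]
    have := mul_le_mul_of_nonneg_left hlog hRa.le
    have hc : R a * (Q a / R a) = Q a := by field_simp
    nlinarith
  have hsum_nl : 0 ≤ ∑ a, R a * Real.log (R a / Q a) := by
    have : ∑ a, (R a - Q a) ≤ ∑ a, R a * Real.log (R a / Q a) :=
      Finset.sum_le_sum (fun a _ => hterm a)
    rw [Finset.sum_sub_distrib, hsumR, hsumQ] at this
    linarith
  have hkl_eq : klDiv R Q = (∑ a, R a * Real.log (R a / Q a)) / Real.log 2 := by
    unfold klDiv
    rw [Finset.sum_div]
    apply Finset.sum_congr rfl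
    intro a _
    rw [Real.logb, div_eq_mul_inv, div_eq_mul_inv]; ring
  have gibbs : 0 ≤ klDiv R Q := by
    rw [hkl_eq]; positivity
  have gibbs_eq : klDiv R Q = 0 → ∀ a, R a = Q a := by
    intro h0 a
    by_contra hne
    have hsum0 : ∑ a, R a * Real.log (R a / Q a) = 0 := by
      rw [hkl_eq] at h0
      field_simp at h0
      rw [mul_zero] at h0
      exact h0
    have hstrict : R a - Q a < R a * Real.log (R a / Q a) := by
      have hQa := htpos a
      have hRa := hRpos a
      have hne1 : Q a / R a ≠ 1 := by
        intro h1
        apply hne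
        field_simp at h1
        linarith
      have hlog : Real.log (Q a / R a) < Q a / R a - 1 :=
        Real.log_lt_sub_one_of_pos (div_pos hQa hRa) hne1
      have hneg : Real.log (R a / Q a) = - Real.log (Q a / R a) := by
        rw [← Real.log_inv, inv_div]
      rw [hneg]
      have := mul_lt_mul_of_pos_left hlog hRa
      have hc : R a * (Q a / R a) = Q a := by field_simp
      nlinarith
    have : ∑ b, (R b - Q b) < ∑ b, R b * Real.log (R b / Q b) := by
      apply Finset.sum_lt_sum (fun b _ => hterm b) ⟨a, Finset.mem_univ a, hstrict⟩
    rw [Finset.sum_sub_distrib, hsumR, hsumQ, hsum0] at this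
    linarith
  refine ⟨key, ?_, ?_⟩
  · rw [key]
    have : 0 ≤ (((N:ℝ)+n)/n) * klDiv R Q := mul_nonneg (by positivity) gibbs
    linarith
  · intro heq
    rw [key] at heq
    have h0 : (((N:ℝ)+n)/n) * klDiv R Q = 0 := by linarith
    have hpos : (0:ℝ) < ((N:ℝ)+n)/n := by positivity
    have hkl0 : klDiv R Q = 0 := by
      rcases mul_eq_zero.mp h0 with h | h
      · exact absurd h (ne_of_gt hpos)
      · exact h
    have hRQ := gibbs_eq hkl0
    funext a
    have := hR a
    rw [hRQ a] at this
    have hna : (n:ℝ) * P a = (n:ℝ) * Q a := by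
      field_simp at this
      linarith
    have := mul_left_cancel₀ (ne_of_gt hn') hna
    exact this
end

section
/- Let N = cn with c > 0 fixed, and define the acceptance region Λ* = {(P,Q) ∈ 𝒫_n × 𝒫_N : h(P,Q) < λ − |𝒳|·log((n+1)(N+1))/n}, where h(P,Q) = D(P‖U) + (N/n)·D(Q‖U) and U = (n/(n+N))P + (N/(n+N))Q. Then for every pmf P_X on 𝒳, the probability that two independent i.i.d.-P_X sequences x^n, t^N have pair of types lying outside Λ* is at most 2^{−n(λ − ν_n)} with ν_n = 2|𝒳|·log((n+1)(N+1))/n; in particular this bound is uniform over all P_X. -/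
open Finset Filter Topology
open scoped Classical

section helpers
variable {X : Type*} [Fintype X] [DecidableEq X]

/-- count of symbol `a` in sequence `x` -/
def cnt {n : ℕ} (x : Fin n → X) (a : X) : ℕ :=
  (Finset.univ.filter (fun i => x i = a)).card

lemma empPmf_eq {n : ℕ} (x : Fin n → X) (a : X) :
    empPmf x a = (cnt x a : ℝ) / n := rfl

lemma sum_cnt {n : ℕ} (x : Fin n → X) : ∑ a, cnt x a = n := by
  classical
  simpa [cnt] using (Finset.sum_card_fiberwise_eq_card_filter (Finset.univ : Finset (Fin n))
    (Finset.univ : Finset X) x).trans (by simp)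

lemma empPmf_nonneg {n : ℕ} (x : Fin n → X) (a : X) : 0 ≤ empPmf x a := by
  rw [empPmf_eq]; positivity

lemma sum_empPmf {n : ℕ} (hn : 0 < n) (x : Fin n → X) : ∑ a, empPmf x a = 1 := by
  have : (∑ a, (cnt x a : ℝ)) = n := by
    rw [← Nat.cast_sum, sum_cnt]
  simp only [empPmf_eq, ← Finset.sum_div, this]
  field_simp

lemma cnt_pos_of_mem {n : ℕ} (x : Fin n → X) (i : Fin n) : 0 < cnt x (x i) := by
  apply Finset.card_pos.2
  exact ⟨i, by simp [Finset.mem_filter]⟩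

lemma empPmf_pos_apply {n : ℕ} (hn : 0 < n) (x : Fin n → X) (i : Fin n) :
    0 < empPmf x (x i) := by
  rw [empPmf_eq]
  have := cnt_pos_of_mem x i
  positivity

lemma empPmf_pos_iff {n : ℕ} (hn : 0 < n) (x : Fin n → X) (a : X) :
    0 < empPmf x a ↔ ∃ i, x i = a := by
  rw [empPmf_eq]
  constructor
  · intro h
    have : 0 < cnt x a := by
      by_contra hc
      push_neg at hc
      interval_cases h' : cnt x a
      simp [h'] at h
    obtain ⟨i, hi⟩ := Finset.card_pos.1 this
    exact ⟨i, (Finset.mem_filter.1 hi).2⟩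
  · intro ⟨i, hi⟩
    subst hi
    exact empPmf_pos_apply hn x i

lemma cnt_append {n N : ℕ} (x : Fin n → X) (t : Fin N → X) (a : X) :
    cnt (Fin.append x t) a = cnt x a + cnt t a := by
  classical
  simp only [cnt, Finset.card_filter]
  rw [Fin.sum_univ_add]
  simp [Fin.append_left, Fin.append_right]

/-- weighted sum over a sequence equals count-weighted sum over alphabet -/
lemma sum_seq_eq {n : ℕ} (x : Fin n → X) (f : X → ℝ) :
    ∑ i, f (x i) = ∑ a, (cnt x a : ℝ) * f a := by
  classical
  rw [← Finset.sum_fiberwise_of_maps_to (fun i _ => Finset.mem_univ (x i)) (fun i => f (x i))]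
  refine Finset.sum_congr rfl fun a _ => ?_
  rw [Finset.sum_congr rfl (fun i hi => by rw [(Finset.mem_filter.1 hi).2])]
  simp [cnt, mul_comm]

/-- Gibbs inequality -/
lemma klDiv_nonneg'_s9 (U PX : X → ℝ) (hU : IsPmf U) (hPX : IsPmf PX)
    (hpos : ∀ a, 0 < U a → 0 < PX a) : 0 ≤ klDiv U PX := by
  have key : ∀ a, U a * Real.logb 2 (PX a / U a) ≤ (PX a - U a) / Real.log 2 := by
    intro a
    have hlog2 : (0:ℝ) < Real.log 2 := Real.log_pos (by norm_num)
    rcases eq_or_lt_of_le (hU.1 a) with h | h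
    · rw [← h]
      simp only [zero_mul, sub_zero]
      exact div_nonneg (hPX.1 a) hlog2.le
    · have hP : 0 < PX a := hpos a h
      have hx : 0 < PX a / U a := by positivity
      have hls := Real.log_le_sub_one_of_pos hx
      rw [Real.logb, mul_div_assoc', div_le_div_iff_of_pos_right hlog2]
      calc U a * Real.log (PX a / U a) ≤ U a * (PX a / U a - 1) :=
            mul_le_mul_of_nonneg_left hls (le_of_lt h)
        _ = PX a - U a := by field_simp
  have hsum : ∑ a, U a * Real.logb 2 (PX a / U a) ≤ 0 := by
    calc ∑ a, U a * Real.logb 2 (PX a / U a) ≤ ∑ a, (PX a - U a) / Real.log 2 :=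
          Finset.sum_le_sum fun a _ => key a
      _ = (∑ a, (PX a - U a)) / Real.log 2 := by rw [Finset.sum_div]
      _ = 0 := by rw [Finset.sum_sub_distrib, hU.2, hPX.2]; simp
  have : klDiv U PX = -∑ a, U a * Real.logb 2 (PX a / U a) := by
    rw [← Finset.sum_neg_distrib]
    refine Finset.sum_congr rfl fun a _ => ?_
    rcases eq_or_lt_of_le (hU.1 a) with h | h
    · simp [← h]
    · have hP : 0 < PX a := hpos a h
      rw [← mul_neg, ← Real.logb_inv]
      congr 1
      rw [inv_div]
  rw [this]
  linarith

end helpers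

section helpers2
variable {X : Type*} [Fintype X] [DecidableEq X]

lemma two_rpow_sum {ι : Type*} (s : Finset ι) (f : ι → ℝ) :
    (2:ℝ) ^ (∑ i ∈ s, f i) = ∏ i ∈ s, (2:ℝ) ^ f i := by
  classical
  induction s using Finset.cons_induction with
  | empty => simp
  | cons a s ha ih => rw [Finset.sum_cons, Finset.prod_cons, Real.rpow_add (by norm_num), ih]

lemma prod_seq_eq {n : ℕ} (hn : 0 < n) (x : Fin n → X) (W : X → ℝ)
    (hW : ∀ i, 0 < W (x i)) :
    ∏ i, W (x i) = (2:ℝ) ^ (-(n:ℝ) * klDiv (empPmf x) W) * ∏ i, empPmf x (x i) := by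
  have hP : ∀ i, 0 < empPmf x (x i) := empPmf_pos_apply hn x
  have hexp : -(n:ℝ) * klDiv (empPmf x) W = ∑ i, Real.logb 2 (W (x i) / empPmf x (x i)) := by
    rw [sum_seq_eq x (fun a => Real.logb 2 (W a / empPmf x a)), klDiv, Finset.mul_sum]
    refine Finset.sum_congr rfl fun a _ => ?_
    rcases Nat.eq_zero_or_pos (cnt x a) with h | h
    · have h0 : empPmf x a = 0 := by rw [empPmf_eq, h]; simp
      simp [h0, h]
    · have hPa : 0 < empPmf x a := by rw [empPmf_eq]; positivity
      obtain ⟨i, hi⟩ := (empPmf_pos_iff hn x a).1 hPa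
      have hWa : 0 < W a := hi ▸ hW i
      have hna : (n:ℝ) * empPmf x a = cnt x a := by
        rw [empPmf_eq]; field_simp
      rw [show -(n:ℝ) * (empPmf x a * Real.logb 2 (empPmf x a / W a))
          = ((n:ℝ) * empPmf x a) * (- Real.logb 2 (empPmf x a / W a)) by ring, hna]
      congr 1
      rw [← Real.logb_inv, inv_div]
  rw [hexp, two_rpow_sum, ← Finset.prod_mul_distrib]
  refine Finset.prod_congr rfl fun i _ => ?_
  rw [Real.rpow_logb (by norm_num) (by norm_num) (div_pos (hW i) (hP i)),
    div_mul_eq_mul_div, mul_div_assoc, div_self (ne_of_gt (hP i)), mul_one]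

/-- The key comparison: divergence to mixture type is at most divergence to true pmf. -/
lemma key_compare {n N : ℕ} (hn : 0 < n) (hN : 0 < N) (x : Fin n → X) (t : Fin N → X)
    (PX : X → ℝ) (hPX : IsPmf PX) (hx : ∀ i, 0 < PX (x i)) (ht : ∀ j, 0 < PX (t j)) :
    (n:ℝ) * klDiv (empPmf x) (empPmf (Fin.append x t)) +
      (N:ℝ) * klDiv (empPmf t) (empPmf (Fin.append x t)) ≤
    (n:ℝ) * klDiv (empPmf x) PX + (N:ℝ) * klDiv (empPmf t) PX := by
  set P := empPmf x with hPdef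
  set Q := empPmf t with hQdef
  set U := empPmf (Fin.append x t) with hUdef
  have hnN : 0 < n + N := by omega
  have hUpmf : IsPmf U := ⟨empPmf_nonneg _, sum_empPmf hnN _⟩
  have hUP : ∀ a, (↑(n+N):ℝ) * U a = (n:ℝ) * P a + (N:ℝ) * Q a := by
    intro a
    rw [hUdef, hPdef, hQdef, empPmf_eq, empPmf_eq, empPmf_eq, cnt_append]
    push_cast
    field_simp
  have hUposPX : ∀ a, 0 < U a → 0 < PX a := by
    intro a ha
    obtain ⟨i, hi⟩ := (empPmf_pos_iff hnN _ a).1 ha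
    revert hi
    refine Fin.addCases (fun j => ?_) (fun j => ?_) i <;> intro hi
    · rw [Fin.append_left] at hi; exact hi ▸ hx j
    · rw [Fin.append_right] at hi; exact hi ▸ ht j
  have hgibbs : 0 ≤ klDiv U PX := klDiv_nonneg'_s9 U PX hUpmf hPX hUposPX
  have hterm : ∀ (p w : ℝ), 0 ≤ p → w ≠ 0 →
      p * Real.logb 2 (p / w) = p * (Real.logb 2 p - Real.logb 2 w) := by
    intro p w hp hw
    rcases eq_or_lt_of_le hp with h | h
    · simp [← h]
    · rw [Real.logb_div (ne_of_gt h) hw]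
  have hmain : (n:ℝ) * klDiv P PX + (N:ℝ) * klDiv Q PX
      - ((n:ℝ) * klDiv P U + (N:ℝ) * klDiv Q U) = (↑(n+N):ℝ) * klDiv U PX := by
    simp only [klDiv, Finset.mul_sum]
    rw [← Finset.sum_add_distrib, ← Finset.sum_add_distrib, ← Finset.sum_sub_distrib]
    refine Finset.sum_congr rfl fun a _ => ?_
    have hPnn : 0 ≤ P a := empPmf_nonneg x a
    have hQnn : 0 ≤ Q a := empPmf_nonneg t a
    have hn' : (0:ℝ) < n := by exact_mod_cast hn
    have hN' : (0:ℝ) < N := by exact_mod_cast hN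
    rcases eq_or_lt_of_le (hUpmf.1 a) with hUa | hUa
    · have h0 : (n:ℝ) * P a + N * Q a = 0 := by rw [← hUP a, ← hUa]; ring
      have hPa : P a = 0 := by nlinarith
      have hQa : Q a = 0 := by nlinarith
      simp [hPa, hQa, ← hUa]
    · have hPXa : 0 < PX a := hUposPX a hUa
      rw [hterm (P a) (PX a) hPnn (ne_of_gt hPXa), hterm (Q a) (PX a) hQnn (ne_of_gt hPXa),
        hterm (P a) (U a) hPnn (ne_of_gt hUa), hterm (Q a) (U a) hQnn (ne_of_gt hUa),
        hterm (U a) (PX a) (le_of_lt hUa) (ne_of_gt hPXa)]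
      linear_combination (Real.logb 2 (PX a) - Real.logb 2 (U a)) * hUP a
  push_cast at hmain
  nlinarith [hgibbs, hmain]

end helpers2

section helpers3
variable {X : Type*} [Fintype X] [DecidableEq X]

lemma sum_prod_emp_le {n : ℕ} (hn : 0 < n) :
    ∑ x : Fin n → X, ∏ i, empPmf x (x i) ≤ ((n:ℝ) + 1) ^ (Fintype.card X) := by
  classical
  have hcnt_lt : ∀ (x : Fin n → X) (a : X), cnt x a < n + 1 := by
    intro x a
    have : cnt x a ≤ n := by
      simpa [cnt] using Finset.card_filter_le (Finset.univ : Finset (Fin n)) (fun i => x i = a)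
    omega
  set T : (Fin n → X) → (X → Fin (n+1)) := fun x a => ⟨cnt x a, hcnt_lt x a⟩ with hT
  rw [← Finset.sum_fiberwise_of_maps_to (fun x _ => Finset.mem_univ (T x))
    (fun x => ∏ i, empPmf x (x i))]
  have hfiber : ∀ c : X → Fin (n+1),
      ∑ x ∈ Finset.univ.filter (fun x => T x = c), ∏ i, empPmf x (x i) ≤ 1 := by
    intro c
    rcases (Finset.univ.filter (fun x => T x = c)).eq_empty_or_nonempty with h | ⟨x0, hx0⟩
    · rw [h, Finset.sum_empty]; norm_num
    · have hc0 : T x0 = c := (Finset.mem_filter.1 hx0).2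
      set g : X → ℝ := fun a => ((c a : ℕ) : ℝ) / n with hg
      have hsum_g : ∑ a, g a = 1 := by
        have : ∀ a, ((c a : ℕ) : ℝ) = cnt x0 a := by
          intro a; rw [← hc0]
        simp only [hg, this, ← Finset.sum_div, ← Nat.cast_sum, sum_cnt]
        field_simp
      calc ∑ x ∈ Finset.univ.filter (fun x => T x = c), ∏ i, empPmf x (x i)
          = ∑ x ∈ Finset.univ.filter (fun x => T x = c), ∏ i, g (x i) := by
            refine Finset.sum_congr rfl fun x hx => Finset.prod_congr rfl fun i _ => ?_
            have hcx : T x = c := (Finset.mem_filter.1 hx).2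
            rw [empPmf_eq, hg]
            congr 1
            rw [← hcx]
        _ ≤ ∑ x : Fin n → X, ∏ i, g (x i) := by
            refine Finset.sum_le_sum_of_subset_of_nonneg (Finset.filter_subset _ _)
              (fun x _ _ => Finset.prod_nonneg fun i _ => ?_)
            rw [hg]; positivity
        _ = ∏ _i : Fin n, ∑ a, g a := by
            rw [Finset.prod_univ_sum]
            simp
        _ = 1 := by rw [hsum_g]; simp
  calc ∑ c : X → Fin (n+1), ∑ x ∈ Finset.univ.filter (fun x => T x = c), ∏ i, empPmf x (x i)
      ≤ ∑ _c : X → Fin (n+1), (1:ℝ) := Finset.sum_le_sum fun c _ => hfiber c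
    _ = ((n:ℝ) + 1) ^ (Fintype.card X) := by
        rw [Finset.sum_const, Finset.card_univ, Fintype.card_fun]
        simp

end helpers3

theorem stmt9 {X : Type*} [Fintype X] [DecidableEq X] {n N : ℕ} (hn : 0 < n) (hN : 0 < N)
    (lam : ℝ) (PX : X → ℝ) (hPX : IsPmf PX) :
    (∑ x : Fin n → X, ∑ t : Fin N → X,
        if ¬ (klDiv (empPmf x) (empPmf (Fin.append x t)) +
              ((N : ℝ) / n) * klDiv (empPmf t) (empPmf (Fin.append x t)) <
              lam - (Fintype.card X : ℝ) * Real.logb 2 (((n : ℝ) + 1) * ((N : ℝ) + 1)) / n)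
        then (∏ i, PX (x i)) * (∏ j, PX (t j)) else 0)
      ≤ (2 : ℝ) ^ (-(n : ℝ) *
          (lam - 2 * (Fintype.card X : ℝ) * Real.logb 2 (((n : ℝ) + 1) * ((N : ℝ) + 1)) / n)) := by
  classical
  set K : ℕ := Fintype.card X with hK
  set L : ℝ := Real.logb 2 (((n : ℝ) + 1) * ((N : ℝ) + 1)) with hL
  set C : ℝ := (2:ℝ) ^ (-(n:ℝ) * lam + (K:ℝ) * L) with hC
  have hCpos : 0 < C := Real.rpow_pos_of_pos (by norm_num) _
  have hn' : (0:ℝ) < n := by exact_mod_cast hn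
  have hN' : (0:ℝ) < N := by exact_mod_cast hN
  have hfnn : ∀ (m : ℕ) (y : Fin m → X), 0 ≤ ∏ i, empPmf y (y i) :=
    fun m y => Finset.prod_nonneg fun i _ => empPmf_nonneg y (y i)
  have hterm : ∀ (x : Fin n → X) (t : Fin N → X),
      (if ¬ (klDiv (empPmf x) (empPmf (Fin.append x t)) +
              ((N : ℝ) / n) * klDiv (empPmf t) (empPmf (Fin.append x t)) <
              lam - (K : ℝ) * L / n)
        then (∏ i, PX (x i)) * (∏ j, PX (t j)) else 0)
      ≤ C * ((∏ i, empPmf x (x i)) * (∏ j, empPmf t (t j))) := by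
    intro x t
    have hrhsnn : 0 ≤ C * ((∏ i, empPmf x (x i)) * (∏ j, empPmf t (t j))) :=
      mul_nonneg hCpos.le (mul_nonneg (hfnn n x) (hfnn N t))
    split_ifs with hcond
    · exact hrhsnn
    · by_cases hz : (∀ i, 0 < PX (x i)) ∧ (∀ j, 0 < PX (t j))
      · obtain ⟨hzx, hzt⟩ := hz
        rw [prod_seq_eq hn x PX hzx, prod_seq_eq hN t PX hzt]
        have hre : (2:ℝ) ^ (-(n:ℝ) * klDiv (empPmf x) PX) * (∏ i, empPmf x (x i)) *
            ((2:ℝ) ^ (-(N:ℝ) * klDiv (empPmf t) PX) * ∏ j, empPmf t (t j))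
            = ((2:ℝ) ^ (-(n:ℝ) * klDiv (empPmf x) PX) * (2:ℝ) ^ (-(N:ℝ) * klDiv (empPmf t) PX)) *
              ((∏ i, empPmf x (x i)) * (∏ j, empPmf t (t j))) := by ring
        rw [hre, ← Real.rpow_add (by norm_num : (0:ℝ) < 2)]
        refine mul_le_mul_of_nonneg_right ?_ (mul_nonneg (hfnn n x) (hfnn N t))
        rw [hC]
        apply Real.rpow_le_rpow_left_iff (x := (2:ℝ)) one_lt_two |>.2
        have hkey := key_compare hn hN x t PX hPX hzx hzt
        have h1 : lam - (K:ℝ) * L / n ≤ klDiv (empPmf x) (empPmf (Fin.append x t)) +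
            ((N : ℝ) / n) * klDiv (empPmf t) (empPmf (Fin.append x t)) := not_lt.1 hcond
        have h2 := mul_le_mul_of_nonneg_left h1 hn'.le
        have e1 : (n:ℝ) * (lam - (K:ℝ) * L / n) = (n:ℝ) * lam - (K:ℝ) * L := by
          field_simp
        have e2 : (n:ℝ) * (klDiv (empPmf x) (empPmf (Fin.append x t)) +
            ((N : ℝ) / n) * klDiv (empPmf t) (empPmf (Fin.append x t)))
            = (n:ℝ) * klDiv (empPmf x) (empPmf (Fin.append x t)) +
              (N:ℝ) * klDiv (empPmf t) (empPmf (Fin.append x t)) := by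
          field_simp
        rw [e1, e2] at h2
        linarith
      · have hzero : (∏ i, PX (x i)) * (∏ j, PX (t j)) = 0 := by
          rcases not_and_or.1 hz with h | h <;> push_neg at h <;> obtain ⟨i, hi⟩ := h
          · rw [Finset.prod_eq_zero (Finset.mem_univ i) (le_antisymm hi (hPX.1 (x i))), zero_mul]
          · rw [Finset.prod_eq_zero (Finset.mem_univ i) (le_antisymm hi (hPX.1 (t i))), mul_zero]
        rw [hzero]
        exact hrhsnn
  calc (∑ x : Fin n → X, ∑ t : Fin N → X,
        if ¬ (klDiv (empPmf x) (empPmf (Fin.append x t)) +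
              ((N : ℝ) / n) * klDiv (empPmf t) (empPmf (Fin.append x t)) <
              lam - (K : ℝ) * L / n)
        then (∏ i, PX (x i)) * (∏ j, PX (t j)) else 0)
      ≤ ∑ x : Fin n → X, ∑ t : Fin N → X,
          C * ((∏ i, empPmf x (x i)) * (∏ j, empPmf t (t j))) :=
        Finset.sum_le_sum fun x _ => Finset.sum_le_sum fun t _ => hterm x t
    _ = C * ((∑ x : Fin n → X, ∏ i, empPmf x (x i)) *
          (∑ t : Fin N → X, ∏ j, empPmf t (t j))) := by
        rw [Finset.sum_mul_sum, Finset.mul_sum]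
        exact Finset.sum_congr rfl fun x _ => by rw [Finset.mul_sum]
    _ ≤ C * ((((n:ℝ) + 1) ^ K) * (((N:ℝ) + 1) ^ K)) := by
        refine mul_le_mul_of_nonneg_left ?_ hCpos.le
        refine mul_le_mul (sum_prod_emp_le hn) (sum_prod_emp_le hN)
          (Finset.sum_nonneg fun t _ => hfnn N t) (by positivity)
    _ = (2 : ℝ) ^ (-(n : ℝ) * (lam - 2 * (K : ℝ) * L / n)) := by
        have hM : (0:ℝ) < ((n:ℝ) + 1) * ((N:ℝ) + 1) := by positivity
        have h2L : (2:ℝ) ^ ((K:ℝ) * L) = (((n:ℝ) + 1) ^ K) * (((N:ℝ) + 1) ^ K) := by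
          rw [mul_comm (K:ℝ) L, Real.rpow_mul (by norm_num : (0:ℝ) ≤ 2), hL,
            Real.rpow_logb (by norm_num) (by norm_num) hM, Real.rpow_natCast, mul_pow]
        rw [← h2L, hC, ← Real.rpow_add (by norm_num : (0:ℝ) < 2)]
        congr 1
        field_simp
        ring
end

section
/- Let Λ ⊆ 𝒫_n × 𝒫_N be any union of pairs of types such that max over all pmf's P_X of the probability P_X{(x^n, t^N) ∉ Λ} is at most 2^{−λn}, where x^n and t^N are independent i.i.d.-P_X sequences. Then the complement of Λ is contained in the complement of Λ* = {(P,Q) : h(P,Q) < λ − |𝒳|·log((n+1)(N+1))/n}; i.e., every pair of types excluded by Λ satisfies h(P,Q) ≥ λ − |𝒳|·log((n+1)(N+1))/n. -/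
open Finset Filter Topology Nat
open scoped Classical

lemma lemA (k m : ℕ) : k ! * k ^ m ≤ (k + m)! := by
  induction m with
  | zero => simp
  | succ m ih =>
    calc k ! * k ^ (m+1) = (k ! * k ^ m) * k := by ring
    _ ≤ (k+m)! * k := Nat.mul_le_mul_right _ ih
    _ ≤ (k+m)! * (k+m+1) := Nat.mul_le_mul_left _ (by omega)
    _ = (k + (m+1))! := by rw [show k + (m+1) = (k+m)+1 from rfl, Nat.factorial_succ]; ring

lemma lemB (l m k : ℕ) (h : l + m ≤ k) : (l + m)! ≤ l ! * k ^ m := by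
  induction m with
  | zero => simp
  | succ m ih =>
    have h' : l + m ≤ k := by omega
    calc (l + (m+1))! = (l+m+1) * (l+m)! := by rw [show l + (m+1) = (l+m)+1 from rfl, Nat.factorial_succ]
    _ ≤ k * (l ! * k ^ m) := Nat.mul_le_mul (by omega) (ih h')
    _ = l ! * k ^ (m+1) := by ring

lemma lemC (k k' : ℕ) : k ! * k ^ k' ≤ k' ! * k ^ k := by
  rcases le_total k k' with h | h
  · obtain ⟨m, rfl⟩ := Nat.exists_eq_add_of_le h
    calc k ! * k ^ (k + m) = (k ! * k ^ m) * k ^ k := by ring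
    _ ≤ (k + m)! * k ^ k := Nat.mul_le_mul_right _ (lemA k m)
  · obtain ⟨m, rfl⟩ := Nat.exists_eq_add_of_le h
    calc (k' + m)! * (k' + m) ^ k' ≤ (k' ! * (k' + m) ^ m) * (k' + m) ^ k' :=
      Nat.mul_le_mul_right _ (lemB k' m (k' + m) le_rfl)
    _ = k' ! * (k' + m) ^ (k' + m) := by ring

lemma lemTerm {X : Type*} [Fintype X] (k k' : X → ℕ) {n : ℕ} (hk : ∑ a, k a = n)
    (hk' : ∑ a, k' a = n) :
    Nat.multinomial univ k' * ∏ a, (k a) ^ (k' a) ≤ Nat.multinomial univ k * ∏ a, (k a) ^ (k a) := by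
  have c1 : (∏ a, (k' a)!) * Nat.multinomial univ k' = n ! := by
    rw [Nat.multinomial_spec]; rw [hk']
  have c2 : (∏ a, (k a)!) * Nat.multinomial univ k = n ! := by
    rw [Nat.multinomial_spec]; rw [hk]
  have hc : 0 < (∏ a, (k' a)!) * (∏ a, (k a)!) :=
    Nat.mul_pos (Finset.prod_pos fun a _ => Nat.factorial_pos _)
      (Finset.prod_pos fun a _ => Nat.factorial_pos _)
  apply Nat.le_of_mul_le_mul_left _ hc
  calc (∏ a, (k' a)!) * (∏ a, (k a)!) * (Nat.multinomial univ k' * ∏ a, (k a) ^ (k' a))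
      = ((∏ a, (k' a)!) * Nat.multinomial univ k') * ((∏ a, (k a)!) * ∏ a, (k a) ^ (k' a)) := by
        ring
    _ = n ! * ∏ a, ((k a)! * (k a) ^ (k' a)) := by rw [c1, Finset.prod_mul_distrib]
    _ ≤ n ! * ∏ a, ((k' a)! * (k a) ^ (k a)) := by
        apply Nat.mul_le_mul_left
        exact Finset.prod_le_prod' fun a _ => lemC (k a) (k' a)
    _ = n ! * ((∏ a, (k' a)!) * ∏ a, (k a) ^ (k a)) := by rw [Finset.prod_mul_distrib]
    _ = (∏ a, (k' a)!) * (∏ a, (k a)!) * (Nat.multinomial univ k * ∏ a, (k a) ^ (k a)) := by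
        rw [← c2]; ring

lemma lemCardPi {X : Type*} [Fintype X] (n : ℕ) :
    (Finset.piAntidiag (univ : Finset X) n).card ≤ (n+1) ^ (Fintype.card X) := by
  classical
  have : (Finset.piAntidiag (univ : Finset X) n).card ≤ (univ : Finset (X → Fin (n+1))).card := by
    apply Finset.card_le_card_of_injOn (fun f a => (⟨min (f a) n, by omega⟩ : Fin (n+1)))
    · intro f _; exact Finset.mem_univ _
    · intro f hf g hg hfg
      rw [Finset.mem_coe, Finset.mem_piAntidiag] at hf hg
      funext a
      have hfa : f a ≤ n := hf.1 ▸ Finset.single_le_sum (fun a _ => Nat.zero_le _) (Finset.mem_univ a)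
      have hga : g a ≤ n := hg.1 ▸ Finset.single_le_sum (fun a _ => Nat.zero_le _) (Finset.mem_univ a)
      have := congrFun hfg a
      simp only [Fin.mk.injEq] at this
      omega
  simpa [Fintype.card_fun] using this

lemma lemE {X : Type*} [Fintype X] (k : X → ℕ) {n : ℕ} (hk : ∑ a, k a = n) :
    n ^ n ≤ (n+1) ^ (Fintype.card X) * (Nat.multinomial univ k * ∏ a, (k a) ^ (k a)) := by
  classical
  have expand : n ^ n = ∑ k' ∈ Finset.piAntidiag (univ : Finset X) n,
      Nat.multinomial univ k' * ∏ a, (k a) ^ (k' a) := by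
    have h := Finset.sum_pow_eq_sum_piAntidiag (univ : Finset X) k n
    rw [hk] at h
    simpa using h
  rw [expand]
  calc ∑ k' ∈ Finset.piAntidiag (univ : Finset X) n,
        Nat.multinomial univ k' * ∏ a, (k a) ^ (k' a)
      ≤ (Finset.piAntidiag (univ : Finset X) n).card •
          (Nat.multinomial univ k * ∏ a, (k a) ^ (k a)) := by
        apply Finset.sum_le_card_nsmul
        intro k' hk'
        rw [Finset.mem_piAntidiag] at hk'
        exact lemTerm k k' hk hk'.1
    _ ≤ (n+1) ^ (Fintype.card X) * (Nat.multinomial univ k * ∏ a, (k a) ^ (k a)) := by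
        rw [smul_eq_mul]
        exact Nat.mul_le_mul_right _ (lemCardPi n)

lemma lemStab {n : ℕ} {X : Type*} [Fintype X] [DecidableEq X] (x : Fin n → X) :
    Fintype.card {π : Equiv.Perm (Fin n) // ∀ i, x (π i) = x i} ≤
      ∏ a, ((univ.filter fun i => x i = a).card)! := by
  have key : Fintype.card {π : Equiv.Perm (Fin n) // ∀ i, x (π i) = x i} ≤
      Fintype.card (∀ a : X, Equiv.Perm {i : Fin n // x i = a}) := by
    apply Fintype.card_le_of_injective
      (fun π => fun a => Equiv.Perm.subtypePerm π.1 (fun i => by rw [π.2 i]))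
    intro π π' h
    apply Subtype.ext; apply Equiv.ext; intro i
    have h2 := congrFun h (x i)
    have h3 := DFunLike.congr_fun h2 (⟨i, rfl⟩ : {j // x j = x i})
    simpa [Equiv.Perm.subtypePerm_apply, Subtype.ext_iff] using h3
  calc Fintype.card {π : Equiv.Perm (Fin n) // ∀ i, x (π i) = x i}
      ≤ Fintype.card (∀ a : X, Equiv.Perm {i : Fin n // x i = a}) := key
    _ = ∏ a, ((univ.filter fun i => x i = a).card)! := by
        rw [Fintype.card_pi]
        refine Finset.prod_congr rfl fun a _ => ?_
        rw [Fintype.card_perm, Fintype.card_subtype]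

lemma lemD {n : ℕ} {X : Type*} [Fintype X] [DecidableEq X] (x : Fin n → X) :
    n ! ≤ (univ.filter fun y : Fin n → X => ∀ a,
        (univ.filter fun i => y i = a).card = (univ.filter fun i => x i = a).card).card *
      ∏ a, ((univ.filter fun i => x i = a).card)! := by
  classical
  set σ0 : (Fin n → X) → Equiv.Perm (Fin n) := fun y =>
    if h : ∃ σ : Equiv.Perm (Fin n), x ∘ σ = y then h.choose else 1 with hσ0
  have hσ0spec : ∀ σ : Equiv.Perm (Fin n), x ∘ (σ0 (x ∘ σ)) = x ∘ σ := by
    intro σ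
    have h : ∃ τ : Equiv.Perm (Fin n), x ∘ τ = x ∘ σ := ⟨σ, rfl⟩
    simp only [hσ0, dif_pos h]
    exact h.choose_spec
  have hinj : Fintype.card (Equiv.Perm (Fin n)) ≤
      Fintype.card ({y : Fin n → X // ∀ a,
          (univ.filter fun i => y i = a).card = (univ.filter fun i => x i = a).card} ×
        {π : Equiv.Perm (Fin n) // ∀ i, x (π i) = x i}) := by
    apply Fintype.card_le_of_injective (fun σ =>
      (⟨x ∘ σ, fun a => Finset.card_equiv σ (fun i => by simp)⟩,
       ⟨(σ0 (x ∘ σ)).symm.trans σ, fun i => by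
          have h1 : x (σ ((σ0 (x ∘ σ)).symm i)) = x (σ0 (x ∘ σ) ((σ0 (x ∘ σ)).symm i)) :=
            (congrFun (hσ0spec σ) ((σ0 (x ∘ σ)).symm i)).symm
          simpa using h1⟩))
    intro σ τ h
    have h1 : x ∘ σ = x ∘ τ := congrArg (fun p => (Prod.fst p).1) h
    have h2 : (σ0 (x ∘ σ)).symm.trans σ = (σ0 (x ∘ τ)).symm.trans τ :=
      congrArg (fun p => (Prod.snd p).1) h
    rw [h1] at h2
    apply Equiv.ext; intro i
    have := congrArg (fun e : Equiv.Perm (Fin n) => e ((σ0 (x ∘ τ)) i)) h2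
    simpa using this
  calc n ! = Fintype.card (Equiv.Perm (Fin n)) := by rw [Fintype.card_perm, Fintype.card_fin]
    _ ≤ _ := hinj
    _ ≤ _ := by
        rw [Fintype.card_prod, Fintype.card_subtype]
        exact Nat.mul_le_mul_left _ (lemStab x)

lemma lemSumCnt {X : Type*} [Fintype X] [DecidableEq X] {m : ℕ} (y : Fin m → X) :
    ∑ a, (univ.filter fun i => y i = a).card = m := by
  rw [← Finset.card_eq_sum_card_fiberwise (fun i _ => Finset.mem_univ (y i))]
  simp

lemma lemProdFiber {X : Type*} [Fintype X] [DecidableEq X] {m : ℕ} (y : Fin m → X) (g : X → ℝ) :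
    ∏ i, g (y i) = ∏ a, g a ^ (univ.filter fun i => y i = a).card := by
  rw [← Finset.prod_fiberwise_of_maps_to (fun i _ => Finset.mem_univ (y i)) (fun i => g (y i))]
  refine Finset.prod_congr rfl fun a _ => ?_
  have : ∀ i ∈ univ.filter fun i => y i = a, g (y i) = g a := by
    intro i hi; rw [Finset.mem_filter] at hi; rw [hi.2]
  rw [Finset.prod_congr rfl this, Finset.prod_const]

lemma lemCntEq {X : Type*} [Fintype X] [DecidableEq X] {m : ℕ} (hm : 0 < m)
    {y z : Fin m → X} (h : empPmf y = empPmf z) (a : X) :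
    (univ.filter fun i => y i = a).card = (univ.filter fun i => z i = a).card := by
  have h1 := congrFun h a
  unfold empPmf at h1
  have hm' : (m : ℝ) ≠ 0 := Nat.cast_ne_zero.mpr hm.ne'
  field_simp at h1
  exact_mod_cast h1

lemma lemKey {X : Type*} [Fintype X] [DecidableEq X] {m : ℕ} (x : Fin m → X) :
    m ^ m ≤ (m+1) ^ (Fintype.card X) *
      ((univ.filter fun y : Fin m → X => empPmf y = empPmf x).card *
        ∏ a, ((univ.filter fun i => x i = a).card) ^ ((univ.filter fun i => x i = a).card)) := by
  classical
  set k : X → ℕ := fun a => (univ.filter fun i => x i = a).card with hk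
  have hks : ∑ a, k a = m := lemSumCnt x
  have hE := lemE k hks
  have hcard : Nat.multinomial univ k ≤
      (univ.filter fun y : Fin m → X => empPmf y = empPmf x).card := by
    have hD := lemD x
    have hspec : Nat.multinomial univ k * ∏ a, (k a)! = m ! := by
      rw [mul_comm, Nat.multinomial_spec, hks]
    have hpos : 0 < ∏ a, (k a)! := Finset.prod_pos fun a _ => Nat.factorial_pos _
    have hsub : (univ.filter fun y : Fin m → X => ∀ a,
          (univ.filter fun i => y i = a).card = (univ.filter fun i => x i = a).card) ⊆
        (univ.filter fun y : Fin m → X => empPmf y = empPmf x) := by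
      intro y hy
      rw [Finset.mem_filter] at hy ⊢
      refine ⟨hy.1, funext fun a => ?_⟩
      unfold empPmf
      rw [hy.2 a]
    have hle := le_trans hD (Nat.mul_le_mul_right _ (Finset.card_le_card hsub))
    rw [← hspec] at hle
    calc Nat.multinomial univ k
        = (Nat.multinomial univ k * ∏ a, (k a)!) / (∏ a, (k a)!) :=
          (Nat.mul_div_cancel _ hpos).symm
      _ ≤ ((univ.filter fun y : Fin m → X => empPmf y = empPmf x).card * ∏ a, (k a)!) /
            (∏ a, (k a)!) := Nat.div_le_div_right hle
      _ = _ := Nat.mul_div_cancel _ hpos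
  calc m ^ m ≤ (m+1) ^ (Fintype.card X) * (Nat.multinomial univ k * ∏ a, (k a) ^ (k a)) := hE
    _ ≤ _ := Nat.mul_le_mul_left _ (Nat.mul_le_mul_right _ hcard)

theorem stmt10 {X : Type*} [Fintype X] [DecidableEq X] {n N : ℕ} (hn : 0 < n) (hN : 0 < N)
    (lam : ℝ) (Λ : (Fin n → X) → (Fin N → X) → Prop)
    (hinv : ∀ x x' t t', empPmf x = empPmf x' → empPmf t = empPmf t' → (Λ x t ↔ Λ x' t'))
    (hfp : ∀ PX : X → ℝ, IsPmf PX →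
      (∑ x : Fin n → X, ∑ t : Fin N → X,
          if ¬ Λ x t then (∏ i, PX (x i)) * (∏ j, PX (t j)) else 0)
        ≤ (2 : ℝ) ^ (-(lam * n))) :
    ∀ x t, ¬ Λ x t →
      klDiv (empPmf x) (empPmf (Fin.append x t)) +
          ((N : ℝ) / n) * klDiv (empPmf t) (empPmf (Fin.append x t)) ≥
        lam - (Fintype.card X : ℝ) * Real.logb 2 (((n : ℝ) + 1) * ((N : ℝ) + 1)) / n := by
  intro x t hxt
  set kx : X → ℕ := fun a => (univ.filter fun i => x i = a).card with hkxdef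
  set kt : X → ℕ := fun a => (univ.filter fun j => t j = a).card with hktdef
  have hkxs : ∑ a, kx a = n := lemSumCnt x
  have hkts : ∑ a, kt a = N := lemSumCnt t
  set U : X → ℝ := empPmf (Fin.append x t) with hUdef
  have happ : ∀ a, (univ.filter fun i => Fin.append x t i = a).card = kx a + kt a := by
    intro a
    rw [Finset.card_filter, Fin.sum_univ_add]
    simp only [Fin.append_left, Fin.append_right]
    rw [← Finset.card_filter, ← Finset.card_filter]
  have hUa : ∀ a, U a = ((kx a + kt a : ℕ) : ℝ) / ((n + N : ℕ) : ℝ) := by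
    intro a
    rw [hUdef]
    unfold empPmf
    rw [happ a]
  have hnN : (0:ℝ) < ((n + N : ℕ) : ℝ) := by positivity
  have hUnn : ∀ a, 0 ≤ U a := by
    intro a; rw [hUa a]; positivity
  have hUpos : ∀ a, kx a + kt a ≠ 0 → 0 < U a := by
    intro a ha
    rw [hUa a]
    apply div_pos _ hnN
    exact_mod_cast Nat.pos_of_ne_zero ha
  have hUpmf : IsPmf U := by
    constructor
    · exact hUnn
    · rw [Finset.sum_congr rfl (fun a _ => hUa a), ← Finset.sum_div]
      rw [← Nat.cast_sum]
      rw [Finset.sum_add_distrib, hkxs, hkts]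
      exact div_self hnN.ne'
  have hS := hfp U hUpmf
  set Tx := univ.filter fun y : Fin n → X => empPmf y = empPmf x with hTxdef
  set Tt := univ.filter fun s : Fin N → X => empPmf s = empPmf t with hTtdef
  set W : ℝ := (∏ a, U a ^ kx a) * (∏ a, U a ^ kt a) with hWdef
  have hWfac : ∀ x' ∈ Tx, ∀ t' ∈ Tt, (∏ i, U (x' i)) * (∏ j, U (t' j)) = W := by
    intro x' hx' t' ht'
    rw [Finset.mem_filter] at hx' ht'
    rw [lemProdFiber x' U, lemProdFiber t' U, hWdef]
    congr 1
    · exact Finset.prod_congr rfl fun a _ => by rw [lemCntEq hn hx'.2 a]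
    · exact Finset.prod_congr rfl fun a _ => by rw [lemCntEq hN ht'.2 a]
  have hFnn : ∀ (x' : Fin n → X) (t' : Fin N → X),
      (0:ℝ) ≤ if ¬ Λ x' t' then (∏ i, U (x' i)) * (∏ j, U (t' j)) else 0 := by
    intro x' t'
    split
    · exact mul_nonneg (Finset.prod_nonneg fun i _ => hUnn _)
        (Finset.prod_nonneg fun j _ => hUnn _)
    · exact le_refl 0
  have hlow : (Tx.card : ℝ) * Tt.card * W ≤ (2:ℝ) ^ (-(lam * n)) := by
    have hval : ∀ x' ∈ Tx, ∀ t' ∈ Tt,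
        (if ¬ Λ x' t' then (∏ i, U (x' i)) * (∏ j, U (t' j)) else 0) = W := by
      intro x' hx' t' ht'
      have hx'2 := (Finset.mem_filter.mp hx').2
      have ht'2 := (Finset.mem_filter.mp ht').2
      rw [if_pos, hWfac x' hx' t' ht']
      intro hcon
      exact hxt ((hinv x' x t' t hx'2 ht'2).mp hcon)
    have hconst : ∑ x' ∈ Tx, ∑ t' ∈ Tt,
        (if ¬ Λ x' t' then (∏ i, U (x' i)) * (∏ j, U (t' j)) else 0)
        = (Tx.card : ℝ) * Tt.card * W := by
      rw [Finset.sum_congr rfl (fun x' hx' =>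
        Finset.sum_congr rfl (fun t' ht' => hval x' hx' t' ht'))]
      simp only [Finset.sum_const, nsmul_eq_mul]
      ring
    rw [← hconst]
    calc ∑ x' ∈ Tx, ∑ t' ∈ Tt, (if ¬ Λ x' t' then (∏ i, U (x' i)) * (∏ j, U (t' j)) else 0)
        ≤ ∑ x' ∈ Tx, ∑ t' : Fin N → X,
            (if ¬ Λ x' t' then (∏ i, U (x' i)) * (∏ j, U (t' j)) else 0) := by
          apply Finset.sum_le_sum
          intro x' _
          exact Finset.sum_le_sum_of_subset_of_nonneg (Finset.subset_univ _)
            (fun t' _ _ => hFnn x' t')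
      _ ≤ ∑ x' : Fin n → X, ∑ t' : Fin N → X,
            (if ¬ Λ x' t' then (∏ i, U (x' i)) * (∏ j, U (t' j)) else 0) := by
          apply Finset.sum_le_sum_of_subset_of_nonneg (Finset.subset_univ _)
          intro x' _ _
          exact Finset.sum_nonneg fun t' _ => hFnn x' t'
      _ ≤ (2:ℝ) ^ (-(lam * n)) := hS
  have hnR : (0:ℝ) < (n:ℝ) := by exact_mod_cast hn
  have hNR : (0:ℝ) < (N:ℝ) := by exact_mod_cast hN
  have hUkx : ∀ a, 0 < U a ^ kx a := by
    intro a
    rcases Nat.eq_zero_or_pos (kx a) with h | h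
    · rw [h, pow_zero]; exact one_pos
    · exact pow_pos (hUpos a (by omega)) _
  have hUkt : ∀ a, 0 < U a ^ kt a := by
    intro a
    rcases Nat.eq_zero_or_pos (kt a) with h | h
    · rw [h, pow_zero]; exact one_pos
    · exact pow_pos (hUpos a (by omega)) _
  have hWpos : 0 < W := mul_pos (Finset.prod_pos fun a _ => hUkx a)
    (Finset.prod_pos fun a _ => hUkt a)
  set Pk : ℝ := ∏ a, ((kx a : ℝ)) ^ (kx a) with hPkdef
  set Qk : ℝ := ∏ a, ((kt a : ℝ)) ^ (kt a) with hQkdef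
  have hPkpos : 0 < Pk := Finset.prod_pos fun a _ => by
    rcases Nat.eq_zero_or_pos (kx a) with h | h
    · rw [h, pow_zero]; exact one_pos
    · exact pow_pos (by exact_mod_cast h) _
  have hQkpos : 0 < Qk := Finset.prod_pos fun a _ => by
    rcases Nat.eq_zero_or_pos (kt a) with h | h
    · rw [h, pow_zero]; exact one_pos
    · exact pow_pos (by exact_mod_cast h) _
  have hTxR : ((n:ℝ))^n ≤ ((n:ℝ)+1) ^ (Fintype.card X) * ((Tx.card : ℝ) * Pk) := by
    have h := lemKey x
    have h2 : ((n ^ n : ℕ) : ℝ) ≤ (((n+1) ^ (Fintype.card X) *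
        (Tx.card * ∏ a, (kx a) ^ (kx a)) : ℕ) : ℝ) := Nat.cast_le.mpr h
    push_cast at h2
    convert h2 using 2
  have hTtR : ((N:ℝ))^N ≤ ((N:ℝ)+1) ^ (Fintype.card X) * ((Tt.card : ℝ) * Qk) := by
    have h := lemKey t
    have h2 : ((N ^ N : ℕ) : ℝ) ≤ (((N+1) ^ (Fintype.card X) *
        (Tt.card * ∏ a, (kt a) ^ (kt a)) : ℕ) : ℝ) := Nat.cast_le.mpr h
    push_cast at h2
    convert h2 using 2
  have hkey : (n:ℝ)^n * (N:ℝ)^N * W ≤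
      (((n:ℝ)+1) * ((N:ℝ)+1)) ^ (Fintype.card X) * (Pk * Qk) * (2:ℝ) ^ (-(lam * n)) := by
    calc (n:ℝ)^n * (N:ℝ)^N * W
        ≤ (((n:ℝ)+1) ^ (Fintype.card X) * ((Tx.card : ℝ) * Pk)) *
            (((N:ℝ)+1) ^ (Fintype.card X) * ((Tt.card : ℝ) * Qk)) * W := by
          apply mul_le_mul_of_nonneg_right _ hWpos.le
          have hb1 : (0:ℝ) ≤ (N:ℝ)^N := by positivity
          have hb2 : (0:ℝ) ≤ ((n:ℝ)+1) ^ (Fintype.card X) * ((Tx.card : ℝ) * Pk) :=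
            le_trans (by positivity) hTxR
          exact mul_le_mul hTxR hTtR hb1 hb2
      _ = (((n:ℝ)+1) * ((N:ℝ)+1)) ^ (Fintype.card X) * (Pk * Qk) *
            ((Tx.card : ℝ) * Tt.card * W) := by rw [mul_pow]; ring
      _ ≤ (((n:ℝ)+1) * ((N:ℝ)+1)) ^ (Fintype.card X) * (Pk * Qk) * (2:ℝ) ^ (-(lam * n)) := by
          apply mul_le_mul_of_nonneg_left hlow
            (mul_nonneg (pow_nonneg (by positivity) _) (mul_nonneg hPkpos.le hQkpos.le))
  set Cc : ℝ := (((n:ℝ)+1) * ((N:ℝ)+1)) ^ (Fintype.card X) with hCcdef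
  have hCcpos : 0 < Cc := by positivity
  have h2pos : (0:ℝ) < (2:ℝ) ^ (lam * n) := Real.rpow_pos_of_pos two_pos _
  have hdenpos : 0 < (n:ℝ)^n * (N:ℝ)^N * W :=
    mul_pos (mul_pos (pow_pos hnR n) (pow_pos hNR N)) hWpos
  set R : ℝ := (Pk * Qk) / ((n:ℝ)^n * (N:ℝ)^N * W) with hRdef
  have hRpos : 0 < R := div_pos (mul_pos hPkpos hQkpos) hdenpos
  have hRlb : (2:ℝ) ^ (lam * n) / Cc ≤ R := by
    rw [hRdef, div_le_div_iff₀ hCcpos hdenpos]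
    rw [show -(lam * (n:ℝ)) = -(lam * n) from rfl, Real.rpow_neg (by norm_num : (0:ℝ) ≤ 2)] at hkey
    calc (2:ℝ) ^ (lam * (n:ℝ)) * ((n:ℝ)^n * (N:ℝ)^N * W)
        ≤ (2:ℝ) ^ (lam * (n:ℝ)) * (Cc * (Pk * Qk) * ((2:ℝ) ^ (lam * (n:ℝ)))⁻¹) :=
          mul_le_mul_of_nonneg_left hkey h2pos.le
      _ = Pk * Qk * Cc := by field_simp
  have hlogR : lam * n - (Fintype.card X : ℝ) * Real.logb 2 (((n:ℝ)+1) * ((N:ℝ)+1)) ≤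
      Real.logb 2 R := by
    have h1 : Real.logb 2 ((2:ℝ) ^ (lam * (n:ℝ)) / Cc) =
        lam * n - (Fintype.card X : ℝ) * Real.logb 2 (((n:ℝ)+1) * ((N:ℝ)+1)) := by
      rw [Real.logb_div h2pos.ne' hCcpos.ne', hCcdef, Real.logb_pow,
        Real.logb_rpow (by norm_num) (by norm_num)]
    rw [← h1]
    exact Real.logb_le_logb_of_le (by norm_num) (div_pos h2pos hCcpos) hRlb
  have hfacx : ∀ a, ((empPmf x a) / U a) ^ kx a ≠ 0 := by
    intro a
    rcases Nat.eq_zero_or_pos (kx a) with h | h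
    · rw [h, pow_zero]; exact one_ne_zero
    · apply pow_ne_zero
      apply div_ne_zero
      · unfold empPmf
        have : (0:ℝ) < (kx a : ℝ) / n := div_pos (by exact_mod_cast h) hnR
        exact this.ne'
      · exact (hUpos a (by omega)).ne'
  have hfact : ∀ a, ((empPmf t a) / U a) ^ kt a ≠ 0 := by
    intro a
    rcases Nat.eq_zero_or_pos (kt a) with h | h
    · rw [h, pow_zero]; exact one_ne_zero
    · apply pow_ne_zero
      apply div_ne_zero
      · unfold empPmf
        have : (0:ℝ) < (kt a : ℝ) / N := div_pos (by exact_mod_cast h) hNR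
        exact this.ne'
      · exact (hUpos a (by omega)).ne'
  have hKLx : (n:ℝ) * klDiv (empPmf x) U =
      Real.logb 2 (∏ a, ((empPmf x a) / U a) ^ kx a) := by
    unfold klDiv
    rw [Finset.mul_sum, Real.logb_prod _ _ (fun a _ => hfacx a)]
    refine Finset.sum_congr rfl fun a _ => ?_
    rw [Real.logb_pow]
    have hPa : (n:ℝ) * empPmf x a = kx a := by
      unfold empPmf
      field_simp
      rfl
    rw [← mul_assoc, hPa]
  have hKLt : (N:ℝ) * klDiv (empPmf t) U =
      Real.logb 2 (∏ a, ((empPmf t a) / U a) ^ kt a) := by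
    unfold klDiv
    rw [Finset.mul_sum, Real.logb_prod _ _ (fun a _ => hfact a)]
    refine Finset.sum_congr rfl fun a _ => ?_
    rw [Real.logb_pow]
    have hPa : (N:ℝ) * empPmf t a = kt a := by
      unfold empPmf
      field_simp
      rfl
    rw [← mul_assoc, hPa]
  have hprodx : (∏ a, ((empPmf x a) / U a) ^ kx a) = Pk / ((n:ℝ)^n * ∏ a, U a ^ kx a) := by
    have e : ∀ a, ((empPmf x a) / U a) ^ kx a =
        ((kx a : ℝ)) ^ kx a / (((n:ℝ)) ^ kx a * U a ^ kx a) := by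
      intro a
      unfold empPmf
      rw [div_div, div_pow, mul_pow]
    rw [Finset.prod_congr rfl (fun a _ => e a), Finset.prod_div_distrib,
      Finset.prod_mul_distrib, Finset.prod_pow_eq_pow_sum, hkxs]
  have hprodt : (∏ a, ((empPmf t a) / U a) ^ kt a) = Qk / ((N:ℝ)^N * ∏ a, U a ^ kt a) := by
    have e : ∀ a, ((empPmf t a) / U a) ^ kt a =
        ((kt a : ℝ)) ^ kt a / (((N:ℝ)) ^ kt a * U a ^ kt a) := by
      intro a
      unfold empPmf
      rw [div_div, div_pow, mul_pow]
    rw [Finset.prod_congr rfl (fun a _ => e a), Finset.prod_div_distrib,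
      Finset.prod_mul_distrib, Finset.prod_pow_eq_pow_sum, hkts]
  have hsum : (n:ℝ) * klDiv (empPmf x) U + (N:ℝ) * klDiv (empPmf t) U = Real.logb 2 R := by
    rw [hKLx, hKLt, ← Real.logb_mul (Finset.prod_ne_zero_iff.mpr fun a _ => hfacx a)
      (Finset.prod_ne_zero_iff.mpr fun a _ => hfact a)]
    congr 1
    rw [hprodx, hprodt, hRdef, hWdef, _root_.div_mul_div_comm]
    congr 1
    ring
  have hfinal : lam * n - (Fintype.card X : ℝ) * Real.logb 2 (((n:ℝ)+1) * ((N:ℝ)+1)) ≤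
      (n:ℝ) * klDiv (empPmf x) U + (N:ℝ) * klDiv (empPmf t) U := by
    rw [hsum]; exact hlogR
  rw [ge_iff_le]
  have hrw : klDiv (empPmf x) U + ((N:ℝ)/n) * klDiv (empPmf t) U =
      ((n:ℝ) * klDiv (empPmf x) U + (N:ℝ) * klDiv (empPmf t) U) / n := by
    field_simp
  rw [hrw, le_div_iff₀ hnR]
  have hexp : (lam - (Fintype.card X : ℝ) * Real.logb 2 (((n:ℝ)+1) * ((N:ℝ)+1)) / n) * n =
      lam * n - (Fintype.card X : ℝ) * Real.logb 2 (((n:ℝ)+1) * ((N:ℝ)+1)) := by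
    field_simp
  rw [hexp]
  exact hfinal
end

section
/- Let N(n)/n → ∞ as n → ∞, and fix pmf's P, Q on 𝒳 with Q(a) > 0 for all a. Let U_n = (n/(n+N(n)))·P + (N(n)/(n+N(n)))·Q. Then (N(n)/n)·D(Q‖U_n) → 0 and D(P‖U_n) → D(P‖Q) as n → ∞; hence h(P,Q) = D(P‖U_n) + (N(n)/n)·D(Q‖U_n) converges to D(P‖Q). -/
open Finset Filter Topology
open scoped Classical

theorem stmt12 {X : Type*} [Fintype X] (N : ℕ → ℕ)
    (hN : Tendsto (fun n : ℕ => (N n : ℝ) / n) atTop atTop)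
    (P Q : X → ℝ) (hP : IsPmf P) (hQ : IsPmf Q) (hQpos : ∀ a, 0 < Q a) :
    Tendsto (fun n : ℕ => ((N n : ℝ) / n) *
        klDiv Q (fun a => ((n : ℝ) / ((n : ℝ) + N n)) * P a + ((N n : ℝ) / ((n : ℝ) + N n)) * Q a))
      atTop (𝓝 0) ∧
    Tendsto (fun n : ℕ =>
        klDiv P (fun a => ((n : ℝ) / ((n : ℝ) + N n)) * P a + ((N n : ℝ) / ((n : ℝ) + N n)) * Q a))
      atTop (𝓝 (klDiv P Q)) ∧
    Tendsto (fun n : ℕ =>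
        klDiv P (fun a => ((n : ℝ) / ((n : ℝ) + N n)) * P a + ((N n : ℝ) / ((n : ℝ) + N n)) * Q a) +
        ((N n : ℝ) / n) *
        klDiv Q (fun a => ((n : ℝ) / ((n : ℝ) + N n)) * P a + ((N n : ℝ) / ((n : ℝ) + N n)) * Q a))
      atTop (𝓝 (klDiv P Q)) := by

  have hlog2 : Real.log 2 ≠ 0 := (Real.log_pos one_lt_two).ne'
  -- per-term derivative of g at 0
  have hterm : ∀ a : X, HasDerivAt
      (fun t : ℝ => Q a * Real.logb 2 (Q a / (t * P a + (1 - t) * Q a)))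
      ((Q a - P a) / Real.log 2) 0 := by
    intro a
    have hQa := hQpos a
    have hu : HasDerivAt (fun t : ℝ => t * P a + (1 - t) * Q a) (P a - Q a) 0 := by
      have h1 := (hasDerivAt_id (0:ℝ)).mul_const (P a)
      have h2 := ((hasDerivAt_id (0:ℝ)).const_sub 1).mul_const (Q a)
      have := h1.add h2
      refine this.congr_deriv ?_
      ring
    have hu0 : (0:ℝ) * P a + (1 - 0) * Q a = Q a := by ring
    have hcu : Continuous (fun t : ℝ => t * P a + (1 - t) * Q a) := by continuity
    have hpos : ∀ᶠ t in 𝓝 (0:ℝ), 0 < t * P a + (1 - t) * Q a := by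
      have : Tendsto (fun t : ℝ => t * P a + (1 - t) * Q a) (𝓝 0) (𝓝 (Q a)) := by
        simpa [hu0] using hcu.tendsto 0
      exact this.eventually (eventually_gt_nhds hQa)
    have hlog : HasDerivAt (fun t : ℝ => Real.log (t * P a + (1 - t) * Q a))
        ((P a - Q a) / Q a) 0 := by
      have := hu.log (by simpa [hu0] using hQa.ne')
      simpa [hu0] using this
    have hf1 : HasDerivAt
        (fun t : ℝ => Q a * ((Real.log (Q a) - Real.log (t * P a + (1 - t) * Q a)) / Real.log 2))
        ((Q a - P a) / Real.log 2) 0 := by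
      have := (((hasDerivAt_const (0:ℝ) (Real.log (Q a))).sub hlog).div_const (Real.log 2)).const_mul (Q a)
      refine this.congr_deriv ?_
      field_simp
      ring
    refine hf1.congr_of_eventuallyEq ?_
    filter_upwards [hpos] with t ht
    rw [Real.logb, Real.log_div hQa.ne' ht.ne']
  have hg : HasDerivAt (fun t : ℝ => ∑ a, Q a * Real.logb 2 (Q a / (t * P a + (1 - t) * Q a))) 0 0 := by
    have := HasDerivAt.fun_sum (fun a (_ : a ∈ Finset.univ) => hterm a)
    refine this.congr_deriv ?_
    rw [← Finset.sum_div]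
    rw [Finset.sum_sub_distrib, hQ.2, hP.2]
    simp
  have hg0 : (∑ a, Q a * Real.logb 2 (Q a / ((0:ℝ) * P a + (1 - 0) * Q a))) = 0 := by
    apply Finset.sum_eq_zero
    intro a _
    have : (0:ℝ) * P a + (1 - 0) * Q a = Q a := by ring
    simp [this, div_self (hQpos a).ne']
  set g : ℝ → ℝ := fun t => ∑ a, Q a * Real.logb 2 (Q a / (t * P a + (1 - t) * Q a)) with hgdef
  set F : ℝ → ℝ := fun t => ∑ a, P a * Real.logb 2 (P a / (t * P a + (1 - t) * Q a)) with hFdef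
  have hF0 : F 0 = klDiv P Q := by
    rw [hFdef, klDiv]
    apply Finset.sum_congr rfl
    intro a _
    have : (0:ℝ) * P a + (1 - 0) * Q a = Q a := by ring
    rw [this]
  have hFc : ContinuousAt F 0 := by
    apply tendsto_finset_sum
    intro a _
    rcases eq_or_lt_of_le (hP.1 a) with hPa | hPa
    · simp only [← hPa, zero_mul]
      exact continuousAt_const
    · have hcu : Continuous (fun t : ℝ => t * P a + (1 - t) * Q a) := by continuity
      have hu0 : (0:ℝ) * P a + (1 - 0) * Q a = Q a := by ring
      have hinner : ContinuousAt (fun t : ℝ => P a / (t * P a + (1 - t) * Q a)) 0 := by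
        exact (continuousAt_const.div hcu.continuousAt (by simpa [hu0] using (hQpos a).ne'))
      have hval : P a / ((0:ℝ) * P a + (1 - 0) * Q a) ≠ 0 := by
        rw [hu0]
        exact (div_pos hPa (hQpos a)).ne'
      have hlogc : ContinuousAt (fun t : ℝ => Real.logb 2 (P a / (t * P a + (1 - t) * Q a))) 0 :=
        ContinuousAt.comp (g := Real.logb 2) (Real.continuousAt_logb hval) hinner
      exact continuousAt_const.mul hlogc
  -- sequence facts
  set s : ℕ → ℝ := fun n => (n : ℝ) / ((n:ℝ) + N n) with hsdef
  have hkey : ∀ᶠ n : ℕ in atTop, 0 < (n:ℝ) ∧ 0 < (N n : ℝ) := by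
    filter_upwards [eventually_ge_atTop 1, hN.eventually_ge_atTop 1] with n h1 h2
    have hn : (0:ℝ) < n := by exact_mod_cast h1
    refine ⟨hn, ?_⟩
    have hle : (1:ℝ) * n ≤ ((N n : ℝ)/n) * n := by nlinarith
    have heqn : ((N n : ℝ)/n) * n = N n := by field_simp
    nlinarith
  have hspos : ∀ᶠ n in atTop, 0 < s n := by
    filter_upwards [hkey] with n hn
    exact div_pos hn.1 (by linarith [hn.1, hn.2])
  have hs0 : Tendsto s atTop (𝓝 0) := by
    have h1 : Tendsto (fun n : ℕ => 1 + (N n:ℝ)/n) atTop atTop :=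
      tendsto_atTop_add_const_left _ 1 hN
    have h2 : Tendsto (fun n : ℕ => (1 + (N n:ℝ)/n)⁻¹) atTop (𝓝 0) := h1.inv_tendsto_atTop
    apply h2.congr'
    filter_upwards [hkey] with n hn
    show (1 + (N n:ℝ)/n)⁻¹ = (n : ℝ) / ((n:ℝ) + N n)
    have hd : (n:ℝ) + N n ≠ 0 := by linarith [hn.1, hn.2]
    have hn1 : (n:ℝ) ≠ 0 := hn.1.ne'
    rw [eq_div_iff hd]
    rw [inv_mul_eq_div, div_eq_iff (by positivity : (1 + (N n:ℝ)/n) ≠ 0)]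
    field_simp
  have hsne : Tendsto s atTop (𝓝[≠] (0:ℝ)) := by
    rw [tendsto_nhdsWithin_iff]
    exact ⟨hs0, hspos.mono fun n h => h.ne'⟩
  have hslope : Tendsto (fun n => g (s n) / s n) atTop (𝓝 0) := by
    have h := (hasDerivAt_iff_tendsto_slope.mp hg).comp hsne
    apply h.congr
    intro n
    have hg0' : g 0 = 0 := hg0
    simp only [Function.comp_apply, slope_def_field, hg0', sub_zero]
  have heqU : ∀ᶠ n : ℕ in atTop,
      (fun a => ((n : ℝ) / ((n : ℝ) + N n)) * P a + ((N n : ℝ) / ((n : ℝ) + N n)) * Q a)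
      = fun a => s n * P a + (1 - s n) * Q a := by
    filter_upwards [hkey] with n hn
    funext a
    have hd : (n:ℝ) + N n ≠ 0 := by linarith [hn.1, hn.2]
    rw [hsdef]
    have : (N n : ℝ) / ((n : ℝ) + N n) = 1 - (n:ℝ)/((n:ℝ) + N n) := by
      field_simp
      ring
    rw [this]
  have hgU : ∀ n, klDiv Q (fun a => s n * P a + (1 - s n) * Q a) = g (s n) := fun n => rfl
  have hFU : ∀ n, klDiv P (fun a => s n * P a + (1 - s n) * Q a) = F (s n) := fun n => rfl
  have T1 : Tendsto (fun n : ℕ => ((N n : ℝ) / n) *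
      klDiv Q (fun a => ((n : ℝ) / ((n : ℝ) + N n)) * P a + ((N n : ℝ) / ((n : ℝ) + N n)) * Q a))
      atTop (𝓝 0) := by
    have h1s : Tendsto (fun n => (1 - s n) * (g (s n)/ s n)) atTop (𝓝 0) := by
      have := ((tendsto_const_nhds (x := (1:ℝ)) (f := atTop)).sub hs0).mul hslope
      simpa using this
    apply Tendsto.congr' _ h1s
    filter_upwards [hkey, heqU, hspos] with n hn heq hsp
    rw [heq, hgU]
    have hd : (n:ℝ) + N n ≠ 0 := by linarith [hn.1, hn.2]
    have hratio : (N n : ℝ)/n = (1 - s n)/ s n := by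
      rw [hsdef]
      field_simp
      ring
    rw [show ((N n:ℝ)/n) * g (s n) = g (s n) * ((N n:ℝ)/n) from mul_comm _ _,
        hratio]
    field_simp
  have T2 : Tendsto (fun n : ℕ =>
      klDiv P (fun a => ((n : ℝ) / ((n : ℝ) + N n)) * P a + ((N n : ℝ) / ((n : ℝ) + N n)) * Q a))
      atTop (𝓝 (klDiv P Q)) := by
    have hFt : Tendsto (fun n => F (s n)) atTop (𝓝 (klDiv P Q)) := by
      have := hFc.tendsto.comp hs0
      rwa [hF0] at this
    apply Tendsto.congr' _ hFt
    filter_upwards [heqU] with n heq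
    rw [heq, hFU]
  refine ⟨T1, T2, ?_⟩
  simpa using T2.add T1
end

section
/- Let N(n)/n → 0 as n → ∞, and fix pmf's P, Q on 𝒳 with P(a) > 0 for all a. Let U_n = (n/(n+N(n)))·P + (N(n)/(n+N(n)))·Q. Then both D(P‖U_n) → 0 and (N(n)/n)·D(Q‖U_n) → 0, hence the generalized log-likelihood ratio h(P,Q) = D(P‖U_n) + (N(n)/n)·D(Q‖U_n) tends to 0. -/
open Finset Filter Topology
open scoped Classical

theorem stmt13 {X : Type*} [Fintype X] (N : ℕ → ℕ)
    (hN : Tendsto (fun n : ℕ => (N n : ℝ) / n) atTop (𝓝 0))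
    (P Q : X → ℝ) (hP : IsPmf P) (hQ : IsPmf Q) (hPpos : ∀ a, 0 < P a) :
    Tendsto (fun n : ℕ =>
        klDiv P (fun a => ((n : ℝ) / ((n : ℝ) + N n)) * P a + ((N n : ℝ) / ((n : ℝ) + N n)) * Q a))
      atTop (𝓝 0) ∧
    Tendsto (fun n : ℕ => ((N n : ℝ) / n) *
        klDiv Q (fun a => ((n : ℝ) / ((n : ℝ) + N n)) * P a + ((N n : ℝ) / ((n : ℝ) + N n)) * Q a))
      atTop (𝓝 0) ∧
    Tendsto (fun n : ℕ =>
        klDiv P (fun a => ((n : ℝ) / ((n : ℝ) + N n)) * P a + ((N n : ℝ) / ((n : ℝ) + N n)) * Q a) +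
        ((N n : ℝ) / n) *
        klDiv Q (fun a => ((n : ℝ) / ((n : ℝ) + N n)) * P a + ((N n : ℝ) / ((n : ℝ) + N n)) * Q a))
      atTop (𝓝 0) := by
  set c : ℕ → ℝ := fun n => (N n : ℝ) / n with hcdef
  set U : ℝ → X → ℝ := fun t a => (1 / (1 + t)) * P a + (t / (1 + t)) * Q a with hUdef
  have hU0 : ∀ a, U 0 a = P a := by intro a; simp [hUdef]
  -- eventual equality of the mixture expression
  have hUeq : ∀ n : ℕ, 1 ≤ n → ∀ a,
      ((n : ℝ) / ((n : ℝ) + N n)) * P a + ((N n : ℝ) / ((n : ℝ) + N n)) * Q a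
        = U (c n) a := by
    intro n hn a
    have hn0 : (0:ℝ) < n := by exact_mod_cast hn
    have h1 : (0:ℝ) < (n:ℝ) + N n := by positivity
    have h2 : (0:ℝ) < 1 + c n := by
      have : (0:ℝ) ≤ c n := by positivity
      linarith
    simp only [hUdef, hcdef]
    field_simp
  have hUcont : ∀ a, ContinuousAt (fun t => U t a) 0 := by
    intro a
    have hc1 : ContinuousAt (fun t : ℝ => 1 + t) 0 := by fun_prop
    have hne : (fun t : ℝ => 1 + t) 0 ≠ 0 := by norm_num
    exact ((continuousAt_const.div hc1 hne).mul continuousAt_const).add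
      ((continuousAt_id.div hc1 hne).mul continuousAt_const)
  -- continuity of each KL summand at t = 0
  have hsummandP : ∀ a, ContinuousAt (fun t => P a * Real.logb 2 (P a / U t a)) 0 := by
    intro a
    refine continuousAt_const.mul ?_
    refine (Real.continuousAt_logb ?_).comp (continuousAt_const.div (hUcont a) ?_)
    · rw [hU0 a]
      exact (div_pos (hPpos a) (hPpos a)).ne'
    · rw [hU0 a]; exact (hPpos a).ne'
  have hsummandQ : ∀ a, ContinuousAt (fun t => Q a * Real.logb 2 (Q a / U t a)) 0 := by
    intro a
    rcases eq_or_lt_of_le (hQ.1 a) with h | h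
    · simp only [← h, zero_mul]
      exact continuousAt_const
    · refine continuousAt_const.mul ?_
      refine (Real.continuousAt_logb ?_).comp (continuousAt_const.div (hUcont a) ?_)
      · rw [hU0 a]
        exact (div_pos h (hPpos a)).ne'
      · rw [hU0 a]; exact (hPpos a).ne'
  have hKP0 : klDiv P (U 0) = 0 := by
    simp only [klDiv]
    refine Finset.sum_eq_zero fun a _ => ?_
    rw [hU0 a, div_self (hPpos a).ne']
    simp
  -- first convergence
  have h1 : Tendsto (fun n : ℕ => klDiv P (U (c n))) atTop (𝓝 0) := by
    have : Tendsto (fun t => klDiv P (U t)) (𝓝 0) (𝓝 (klDiv P (U 0))) := by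
      unfold klDiv
      exact tendsto_finset_sum _ fun a _ => (hsummandP a).tendsto
    rw [hKP0] at this
    exact this.comp hN
  -- second convergence
  have h2 : Tendsto (fun n : ℕ => c n * klDiv Q (U (c n))) atTop (𝓝 0) := by
    have hQcont : Tendsto (fun t => klDiv Q (U t)) (𝓝 0) (𝓝 (klDiv Q (U 0))) := by
      unfold klDiv
      exact tendsto_finset_sum _ fun a _ => (hsummandQ a).tendsto
    have := hN.mul (hQcont.comp hN)
    simpa using this
  -- eventual equality
  have heq1 : (fun n : ℕ =>
      klDiv P (fun a => ((n : ℝ) / ((n : ℝ) + N n)) * P a + ((N n : ℝ) / ((n : ℝ) + N n)) * Q a))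
      =ᶠ[atTop] fun n : ℕ => klDiv P (U (c n)) := by
    filter_upwards [eventually_ge_atTop 1] with n hn
    exact congrArg (klDiv P) (funext (hUeq n hn))
  have heq2 : (fun n : ℕ => ((N n : ℝ) / n) *
      klDiv Q (fun a => ((n : ℝ) / ((n : ℝ) + N n)) * P a + ((N n : ℝ) / ((n : ℝ) + N n)) * Q a))
      =ᶠ[atTop] fun n : ℕ => c n * klDiv Q (U (c n)) := by
    filter_upwards [eventually_ge_atTop 1] with n hn
    rw [congrArg (klDiv Q) (funext (hUeq n hn))]
  have H1 := h1.congr' heq1.symm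
  have H2 := h2.congr' heq2.symm
  refine ⟨H1, H2, ?_⟩
  simpa using H1.add H2
end

section
/- Upper bound on false-negative probability for the training-data game: with N = cn, let Γ^∞(Q) be closed subsets of the simplex indexed by pmf's Q, and suppose Γ^n(Q) ⊆ Γ^∞(Q) for all n and Q ∈ 𝒫_N. Then the quantity P_fn = Σ_{Q ∈ 𝒫_N} P_X(T(Q)) Σ_{P ∈ Γ^n(Q)} P_Y(T(P)) satisfies P_fn ≤ (n+1)^{|𝒳|}(N+1)^{|𝒳|} · 2^{−n · min_Q [c·D(Q‖P_X) + min_{P ∈ Γ^∞(Q)} D(P‖P_Y)]}, where the outer minimum is over all pmf's Q on 𝒳. -/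
open Finset Filter Topology
open scoped Classical

/- ### Auxiliary lemmas -/

lemma aux_rpow_sum {α : Type*} (s : Finset α) (f : α → ℝ) :
    (2:ℝ) ^ (∑ a ∈ s, f a) = ∏ a ∈ s, (2:ℝ) ^ (f a) := by
  induction s using Finset.cons_induction with
  | empty => simp
  | cons a s ha ih => rw [Finset.sum_cons, Finset.prod_cons, Real.rpow_add (by norm_num), ih]

lemma aux_empPmf_nonneg {X : Type*} [Fintype X] [DecidableEq X] {n : ℕ} (x : Fin n → X) (a : X) :
    0 ≤ empPmf x a := by
  unfold empPmf; positivity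

lemma aux_empPmf_sum {X : Type*} [Fintype X] [DecidableEq X] {n : ℕ} (hn : 0 < n) (x : Fin n → X) :
    ∑ a, empPmf x a = 1 := by
  unfold empPmf
  rw [← Finset.sum_div, ← Nat.cast_sum,
    ← Finset.card_eq_sum_card_fiberwise (t := univ) (fun i _ => mem_univ (x i))]
  simp [Finset.card_univ, div_self (by positivity : ((n:ℕ):ℝ) ≠ 0)]

lemma aux_isPmf_empPmf {X : Type*} [Fintype X] [DecidableEq X] {n : ℕ} (hn : 0 < n)
    (x : Fin n → X) : IsPmf (empPmf x) := ⟨aux_empPmf_nonneg x, aux_empPmf_sum hn x⟩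

lemma aux_prod_comp_eq_prod_pow {X : Type*} [Fintype X] [DecidableEq X] {n : ℕ}
    (f : X → ℝ) (x : Fin n → X) :
    ∏ i, f (x i) = ∏ a, f a ^ (univ.filter (fun i => x i = a)).card := by
  rw [← Finset.prod_fiberwise univ (fun i => x i) (fun i => f (x i))]
  refine Finset.prod_congr rfl fun a _ => ?_
  rw [Finset.prod_congr rfl (fun i hi => by rw [(Finset.mem_filter.1 hi).2]), Finset.prod_const]

lemma aux_sum_prod_eq_pow {X : Type*} [Fintype X] {n : ℕ} (f : X → ℝ) :
    ∑ x : Fin n → X, ∏ i, f (x i) = (∑ a, f a) ^ n := by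
  rw [← Fintype.piFinset_univ, ← Finset.prod_univ_sum (fun _ => univ) (fun _ a => f a)]
  simp [Finset.prod_const, Finset.card_univ]

lemma aux_sum_prod_le_pow {X : Type*} [Fintype X] [DecidableEq X] {n : ℕ} (hn : 0 < n) :
    ∑ x : Fin n → X, ∏ i, empPmf x (x i) ≤ ((n:ℝ)+1) ^ (Fintype.card X) := by
  classical
  set g : (Fin n → X) → (X → Fin (n+1)) := fun x a =>
    ⟨(univ.filter (fun i => x i = a)).card, by
      have := Finset.card_filter_le (univ : Finset (Fin n)) (fun i => x i = a)
      simpa using Nat.lt_succ_of_le (by simpa using this)⟩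
  calc ∑ x : Fin n → X, ∏ i, empPmf x (x i)
      = ∑ v : X → Fin (n+1), ∑ x ∈ univ.filter (fun x => g x = v), ∏ i, empPmf x (x i) :=
        (Finset.sum_fiberwise univ g _).symm
    _ ≤ ∑ v : X → Fin (n+1), 1 := by
        refine Finset.sum_le_sum fun v _ => ?_
        rcases Finset.eq_empty_or_nonempty (univ.filter (fun x => g x = v)) with he | ⟨x₀, hx₀⟩
        · rw [he]; simp
        · have hx₀v : g x₀ = v := (Finset.mem_filter.1 hx₀).2
          have hemp : ∀ x ∈ univ.filter (fun x => g x = v), empPmf x = empPmf x₀ := by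
            intro x hx
            funext a
            have h1 : g x = v := (Finset.mem_filter.1 hx).2
            have hcc : (univ.filter (fun i => x i = a)).card
                = (univ.filter (fun i => x₀ i = a)).card :=
              congrArg (fun w => (w a : ℕ)) (h1.trans hx₀v.symm)
            simp [empPmf, hcc]
          calc ∑ x ∈ univ.filter (fun x => g x = v), ∏ i, empPmf x (x i)
              = ∑ x ∈ univ.filter (fun x => g x = v), ∏ i, empPmf x₀ (x i) := by
                refine Finset.sum_congr rfl fun x hx => Finset.prod_congr rfl fun i _ => by
                  rw [hemp x hx]
            _ ≤ ∑ x : Fin n → X, ∏ i, empPmf x₀ (x i) := by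
                refine Finset.sum_le_sum_of_subset_of_nonneg (Finset.filter_subset _ _)
                  fun x _ _ => Finset.prod_nonneg fun i _ => aux_empPmf_nonneg x₀ (x i)
            _ = 1 := by rw [aux_sum_prod_eq_pow, aux_empPmf_sum hn x₀, one_pow]
    _ = ((n:ℝ)+1) ^ (Fintype.card X) := by
        rw [Finset.sum_const, Finset.card_univ, Fintype.card_fun]
        push_cast [Fintype.card_fin]
        simp [nsmul_eq_mul]

lemma aux_klDiv_nonneg {X : Type*} [Fintype X] {P Q : X → ℝ} (hP : IsPmf P)
    (hQpos : ∀ a, 0 < Q a) (hQ : ∑ a, Q a = 1) : 0 ≤ klDiv P Q := by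
  have key : ∀ a, P a - Q a ≤ P a * Real.log (P a / Q a) := by
    intro a
    rcases eq_or_lt_of_le (hP.1 a) with h0 | hpos
    · rw [← h0]; simp; linarith [(hQpos a).le]
    · have h1 : Real.log (Q a / P a) ≤ Q a / P a - 1 :=
        Real.log_le_sub_one_of_pos (div_pos (hQpos a) hpos)
      have h2 : Real.log (P a / Q a) = - Real.log (Q a / P a) := by
        rw [← Real.log_inv]; congr 1; field_simp
      nlinarith [mul_le_mul_of_nonneg_left h1 hpos.le,
        mul_div_cancel₀ (Q a) (ne_of_gt hpos)]
  have hsum : 0 ≤ ∑ a, P a * Real.log (P a / Q a) := by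
    have := Finset.sum_le_sum (fun a (_ : a ∈ univ) => key a)
    rw [Finset.sum_sub_distrib, hP.2, hQ] at this
    linarith
  have heq : klDiv P Q = (∑ a, P a * Real.log (P a / Q a)) / Real.log 2 := by
    unfold klDiv Real.logb
    rw [Finset.sum_div]
    exact Finset.sum_congr rfl fun a _ => by ring
  rw [heq]
  exact div_nonneg hsum (Real.log_nonneg (by norm_num))

/-- change of measure: `f^n(x) = 2^{-n D(emp x ‖ f)} * (emp x)^n(x)` -/
lemma aux_prod_eq_rpow_klDiv {X : Type*} [Fintype X] [DecidableEq X] {n : ℕ} (hn : 0 < n)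
    (f : X → ℝ) (hf : ∀ a, 0 < f a) (x : Fin n → X) :
    ∏ i, f (x i) = (2:ℝ) ^ (-(n:ℝ) * klDiv (empPmf x) f) * ∏ i, empPmf x (x i) := by
  have hn' : (n:ℝ) ≠ 0 := Nat.cast_ne_zero.2 hn.ne'
  set c : X → ℕ := fun a => (univ.filter (fun i => x i = a)).card with hc
  have hkey : (2:ℝ) ^ ((n:ℝ) * klDiv (empPmf x) f) * ∏ i, f (x i) = ∏ i, empPmf x (x i) := by
    have h1 : (n:ℝ) * klDiv (empPmf x) f
        = ∑ a, (c a : ℝ) * Real.logb 2 (empPmf x a / f a) := by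
      unfold klDiv
      rw [Finset.mul_sum]
      refine Finset.sum_congr rfl fun a _ => ?_
      have : (n:ℝ) * empPmf x a = (c a : ℝ) := by
        unfold empPmf; field_simp; rfl
      rw [← mul_assoc, this]
    rw [h1, aux_rpow_sum, aux_prod_comp_eq_prod_pow f x, aux_prod_comp_eq_prod_pow (empPmf x) x,
      ← Finset.prod_mul_distrib]
    refine Finset.prod_congr rfl fun a _ => ?_
    rcases Nat.eq_zero_or_pos (c a) with h0 | hpos
    · have h0' : (univ.filter (fun i => x i = a)).card = 0 := h0
      simp [h0', h0]
    · have hea : 0 < empPmf x a := by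
        unfold empPmf
        have : (0:ℝ) < (c a : ℝ) := by exact_mod_cast hpos
        positivity
      have hr : (0:ℝ) < empPmf x a / f a := div_pos hea (hf a)
      rw [mul_comm ((c a : ℝ)) _, Real.rpow_mul (by norm_num : (0:ℝ) ≤ 2),
        Real.rpow_logb (by norm_num) (by norm_num) hr, Real.rpow_natCast, div_pow,
        div_mul_cancel₀ _ (pow_ne_zero _ (ne_of_gt (hf a)))]
  have hpos2 : (0:ℝ) < (2:ℝ) ^ ((n:ℝ) * klDiv (empPmf x) f) :=
    Real.rpow_pos_of_pos (by norm_num) _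
  rw [← hkey, neg_mul, Real.rpow_neg (by norm_num : (0:ℝ) ≤ 2), ← mul_assoc,
    inv_mul_cancel₀ (ne_of_gt hpos2), one_mul]

theorem stmt16 {X : Type*} [Fintype X] [DecidableEq X] {n N : ℕ} (hn : 0 < n) (hN : 0 < N)
    (c : ℝ) (hc : 0 < c) (hcn : (N : ℝ) = c * n)
    (PX PY : X → ℝ) (hPX : IsPmf PX) (hPY : IsPmf PY)
    (hPXpos : ∀ a, 0 < PX a) (hPYpos : ∀ a, 0 < PY a)
    (Γn Γinf : (X → ℝ) → Set (X → ℝ))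
    (hcl : ∀ Q, IsClosed (Γinf Q)) (hsub : ∀ Q, Γn Q ⊆ Γinf Q) :
    (∑ t : Fin N → X, (∏ j, PX (t j)) *
        ∑ y : Fin n → X, if empPmf y ∈ Γn (empPmf t) then (∏ i, PY (y i)) else 0)
      ≤ ((n : ℝ) + 1) ^ (Fintype.card X) * ((N : ℝ) + 1) ^ (Fintype.card X) *
        (2 : ℝ) ^ (-(n : ℝ) * sInf {r : ℝ | ∃ Q : X → ℝ, IsPmf Q ∧
            r = c * klDiv Q PX + sInf ((fun P => klDiv P PY) '' Γinf Q)}) := by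
  set S : Set ℝ := {r : ℝ | ∃ Q : X → ℝ, IsPmf Q ∧
      r = c * klDiv Q PX + sInf ((fun P => klDiv P PY) '' Γinf Q)} with hS
  have hone_le : (1:ℝ) ≤ ((n : ℝ) + 1) ^ (Fintype.card X) * ((N : ℝ) + 1) ^ (Fintype.card X) := by
    have h1 : (1:ℝ) ≤ ((n:ℝ)+1) := by have := (Nat.cast_nonneg n : (0:ℝ) ≤ n); linarith
    have h2 : (1:ℝ) ≤ ((N:ℝ)+1) := by have := (Nat.cast_nonneg N : (0:ℝ) ≤ N); linarith
    have := mul_le_mul (one_le_pow₀ h1 (n := Fintype.card X))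
      (one_le_pow₀ h2 (n := Fintype.card X)) (by norm_num) (by positivity)
    linarith
  by_cases hbdd : BddBelow S
  · -- bounded case
    have hterm : ∀ (t : Fin N → X) (y : Fin n → X),
        (if empPmf y ∈ Γn (empPmf t) then (∏ j, PX (t j)) * (∏ i, PY (y i)) else 0)
        ≤ (2:ℝ) ^ (-(n:ℝ) * sInf S) *
          ((∏ j, empPmf t (t j)) * (∏ i, empPmf y (y i))) := by
      intro t y
      have hAB : 0 ≤ (∏ j, empPmf t (t j)) * (∏ i, empPmf y (y i)) :=
        mul_nonneg (Finset.prod_nonneg fun j _ => aux_empPmf_nonneg t (t j))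
          (Finset.prod_nonneg fun i _ => aux_empPmf_nonneg y (y i))
      split_ifs with h
      · have hDP : 0 ≤ klDiv (empPmf y) PY :=
          aux_klDiv_nonneg (aux_isPmf_empPmf hn y) hPYpos hPY.2
        have hinner : sInf ((fun P => klDiv P PY) '' Γinf (empPmf t)) ≤ klDiv (empPmf y) PY := by
          by_cases hb2 : BddBelow ((fun P => klDiv P PY) '' Γinf (empPmf t))
          · exact csInf_le hb2 ⟨empPmf y, hsub _ h, rfl⟩
          · rw [Real.sInf_of_not_bddBelow hb2]; exact hDP
        have hMle : sInf S ≤ c * klDiv (empPmf t) PX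
            + sInf ((fun P => klDiv P PY) '' Γinf (empPmf t)) :=
          csInf_le hbdd ⟨empPmf t, aux_isPmf_empPmf hN t, rfl⟩
        have hexp : -(N:ℝ) * klDiv (empPmf t) PX + -(n:ℝ) * klDiv (empPmf y) PY
            ≤ -(n:ℝ) * sInf S := by
          have hn0 : (0:ℝ) ≤ (n:ℝ) := Nat.cast_nonneg n
          have h1 : (n:ℝ) * sInf S ≤ (n:ℝ) * (c * klDiv (empPmf t) PX
              + sInf ((fun P => klDiv P PY) '' Γinf (empPmf t))) :=
            mul_le_mul_of_nonneg_left hMle hn0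
          have h2 : (n:ℝ) * sInf ((fun P => klDiv P PY) '' Γinf (empPmf t))
              ≤ (n:ℝ) * klDiv (empPmf y) PY := mul_le_mul_of_nonneg_left hinner hn0
          rw [hcn]
          nlinarith
        rw [aux_prod_eq_rpow_klDiv hN PX hPXpos t, aux_prod_eq_rpow_klDiv hn PY hPYpos y]
        calc ((2:ℝ) ^ (-(N:ℝ) * klDiv (empPmf t) PX) * ∏ j, empPmf t (t j)) *
              ((2:ℝ) ^ (-(n:ℝ) * klDiv (empPmf y) PY) * ∏ i, empPmf y (y i))
            = (2:ℝ) ^ (-(N:ℝ) * klDiv (empPmf t) PX + -(n:ℝ) * klDiv (empPmf y) PY) *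
              ((∏ j, empPmf t (t j)) * (∏ i, empPmf y (y i))) := by
              rw [Real.rpow_add (by norm_num : (0:ℝ) < 2)]; ring
          _ ≤ (2:ℝ) ^ (-(n:ℝ) * sInf S) *
              ((∏ j, empPmf t (t j)) * (∏ i, empPmf y (y i))) :=
              mul_le_mul_of_nonneg_right
                ((Real.rpow_le_rpow_left_iff (by norm_num : (1:ℝ) < 2)).2 hexp) hAB
      · positivity
    calc (∑ t : Fin N → X, (∏ j, PX (t j)) *
          ∑ y : Fin n → X, if empPmf y ∈ Γn (empPmf t) then (∏ i, PY (y i)) else 0)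
        = ∑ t : Fin N → X, ∑ y : Fin n → X,
            (if empPmf y ∈ Γn (empPmf t) then (∏ j, PX (t j)) * (∏ i, PY (y i)) else 0) := by
          refine Finset.sum_congr rfl fun t _ => ?_
          rw [Finset.mul_sum]
          exact Finset.sum_congr rfl fun y _ => by rw [mul_ite, mul_zero]
      _ ≤ ∑ t : Fin N → X, ∑ y : Fin n → X, (2:ℝ) ^ (-(n:ℝ) * sInf S) *
            ((∏ j, empPmf t (t j)) * (∏ i, empPmf y (y i))) :=
          Finset.sum_le_sum fun t _ => Finset.sum_le_sum fun y _ => hterm t y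
      _ = (2:ℝ) ^ (-(n:ℝ) * sInf S) *
            ((∑ t : Fin N → X, ∏ j, empPmf t (t j)) * (∑ y : Fin n → X, ∏ i, empPmf y (y i))) := by
          rw [Finset.sum_mul_sum, Finset.mul_sum]
          exact Finset.sum_congr rfl fun t _ => by rw [Finset.mul_sum]
      _ ≤ (2:ℝ) ^ (-(n:ℝ) * sInf S) * (((N:ℝ)+1) ^ (Fintype.card X) * ((n:ℝ)+1) ^ (Fintype.card X)) := by
          refine mul_le_mul_of_nonneg_left ?_ (Real.rpow_nonneg (by norm_num) _)
          refine mul_le_mul (aux_sum_prod_le_pow hN) (aux_sum_prod_le_pow hn)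
            (Finset.sum_nonneg fun y _ => Finset.prod_nonneg fun i _ => aux_empPmf_nonneg y (y i))
            (by positivity)
      _ = ((n : ℝ) + 1) ^ (Fintype.card X) * ((N : ℝ) + 1) ^ (Fintype.card X) *
            (2 : ℝ) ^ (-(n : ℝ) * sInf S) := by ring
  · -- S not bounded below: sInf S = 0
    rw [Real.sInf_of_not_bddBelow hbdd, mul_zero, Real.rpow_zero, mul_one]
    have hLHS : (∑ t : Fin N → X, (∏ j, PX (t j)) *
        ∑ y : Fin n → X, if empPmf y ∈ Γn (empPmf t) then (∏ i, PY (y i)) else 0) ≤ 1 := by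
      have hPYsum : ∑ y : Fin n → X, ∏ i, PY (y i) = 1 := by
        rw [aux_sum_prod_eq_pow, hPY.2, one_pow]
      have hPXsum : ∑ t : Fin N → X, ∏ j, PX (t j) = 1 := by
        rw [aux_sum_prod_eq_pow, hPX.2, one_pow]
      calc (∑ t : Fin N → X, (∏ j, PX (t j)) *
            ∑ y : Fin n → X, if empPmf y ∈ Γn (empPmf t) then (∏ i, PY (y i)) else 0)
          ≤ ∑ t : Fin N → X, (∏ j, PX (t j)) * 1 := by
            refine Finset.sum_le_sum fun t _ => ?_
            refine mul_le_mul_of_nonneg_left ?_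
              (Finset.prod_nonneg fun j _ => (hPXpos (t j)).le)
            rw [← hPYsum]
            refine Finset.sum_le_sum fun y _ => ?_
            split_ifs with h
            · exact le_refl _
            · exact Finset.prod_nonneg fun i _ => (hPYpos (y i)).le
        _ = 1 := by simp only [mul_one]; exact hPXsum
    linarith
end
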